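/- Let ν be a lattice path and δ an increment vector for ν. For every ν-path μ = (μ_0, …, μ_n) there is a unique (δ,ν)-tree flush_{δ,ν}(μ) having exactly μ_i + 1 points at height i for each 0 ≤ i ≤ n, and the map flush_{δ,ν} is a bijection from the set of ν-paths to the set of (δ,ν)-trees. Moreover, two ν-paths μ, μ′ are related by a δ-rotation if and only if the trees flush_{δ,ν}(μ), flush_{δ,ν}(μ′) are related by a ν̌-rotation. -/
import Mathlib


/-!
Common definitions for the paper "The alt ν-Tamari lattices".

A lattice path ν from (0,0) to (m,n) is encoded as the list (ν_0, ..., ν_n)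
of its east-step block lengths (ν_0 initial east steps, ν_i the east steps
immediately following the i-th north step).  Thus `ν.length = n + 1` and
`ν.sum = m`.
-/

/-- `μ` is a ν-path: same endpoints as `ν` and weakly above `ν`. -/
def IsNuPath (ν μ : List ℕ) : Prop :=
  μ.length = ν.length ∧ (∀ j : ℕ, (μ.take j).sum ≤ (ν.take j).sum) ∧ μ.sum = ν.sum

/-! ### The ν-Dyck lattice -/

/-- The Dyck order: `P ≤ Q` iff `Q` lies weakly above `P`. -/
def dyckLE (P Q : List ℕ) : Prop := ∀ j : ℕ, (Q.take j).sum ≤ (P.take j).sum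

/-- Covering relation of the ν-Dyck lattice. -/
def dyckCovBy (ν P Q : List ℕ) : Prop :=
  IsNuPath ν P ∧ IsNuPath ν Q ∧ dyckLE P Q ∧ P ≠ Q ∧
    ∀ R, IsNuPath ν R → dyckLE P R → dyckLE R Q → R = P ∨ R = Q

/-- `[P,Q]` is a linear interval of length `ℓ` in the ν-Dyck lattice:
the interval is totally ordered and there is a maximal chain of length `ℓ`
from `P` to `Q`. -/
def IsDyckLinear (ν P Q : List ℕ) (ℓ : ℕ) : Prop :=
  IsNuPath ν P ∧ IsNuPath ν Q ∧ dyckLE P Q ∧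
  (∀ R S, IsNuPath ν R → IsNuPath ν S → dyckLE P R → dyckLE R Q →
    dyckLE P S → dyckLE S Q → dyckLE R S ∨ dyckLE S R) ∧
  ∃ c : ℕ → List ℕ, c 0 = P ∧ c ℓ = Q ∧ ∀ k, k < ℓ → dyckCovBy ν (c k) (c (k + 1))

/-- `[P,Q]` is a left interval in the ν-Dyck lattice: `Q` is obtained from `P`
by replacing a consecutive subword `E^ℓ N` by `N E^ℓ` (the `ℓ` east steps are
moved from the block before the `(i+1)`-st north step to the block after it). -/
def IsLeftDyck (ν P Q : List ℕ) (ℓ : ℕ) : Prop :=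
  IsNuPath ν P ∧ IsNuPath ν Q ∧ 1 ≤ ℓ ∧
  ∃ i, i + 1 < P.length ∧ ℓ ≤ P.getD i 0 ∧
    Q = (P.set i (P.getD i 0 - ℓ)).set (i + 1) (P.getD (i + 1) 0 + ℓ)

/-- `[P,Q]` is a right interval in the ν-Dyck lattice: `Q` is obtained from `P`
by replacing a consecutive subword `E N^ℓ` by `N^ℓ E`. -/
def IsRightDyck (ν P Q : List ℕ) (ℓ : ℕ) : Prop :=
  IsNuPath ν P ∧ IsNuPath ν Q ∧ 1 ≤ ℓ ∧
  ∃ i, i + ℓ < P.length ∧ 1 ≤ P.getD i 0 ∧ (∀ j, i < j → j < i + ℓ → P.getD j 0 = 0) ∧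
    Q = (P.set i (P.getD i 0 - 1)).set (i + ℓ) (P.getD (i + ℓ) 0 + 1)

/-! ### Increment vectors, δ-rotations and alt ν-Tamari posets -/

/-- `δ = (δ_1, …, δ_n)` is an increment vector with respect to `ν`:
`δ_i ≤ ν_i` for `1 ≤ i ≤ n`.  (List index `i` of `δ` holds `δ_{i+1}`.) -/
def IsIncrement (ν δ : List ℕ) : Prop :=
  δ.length + 1 = ν.length ∧ ∀ i, i < δ.length → δ.getD i 0 ≤ ν.getD (i + 1) 0

/-- `μ'` is the δ-rotation of `μ` at the valley preceding the `(i+1)`-st north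
step.  The δ-excursion starting with the `(i+1)`-st north step ends in block `k`
(the first block where the δ-altitude returns to its value at the valley), and
the east step of the valley is exchanged with this excursion, i.e. moved from
block `i` to block `k`. -/
def IsDeltaRotation (δ μ μ' : List ℕ) (i : ℕ) : Prop :=
  i + 1 < μ.length ∧ 1 ≤ μ.getD i 0 ∧
  ∃ k, i < k ∧ k < μ.length ∧
    (∑ t ∈ Finset.Ico i k, δ.getD t 0) ≤ (∑ t ∈ Finset.Ico (i + 1) (k + 1), μ.getD t 0) ∧
    (∀ k', i < k' → k' < k →
      (∑ t ∈ Finset.Ico (i + 1) (k' + 1), μ.getD t 0) < (∑ t ∈ Finset.Ico i k', δ.getD t 0)) ∧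
    μ' = (μ.set i (μ.getD i 0 - 1)).set k (μ.getD k 0 + 1)

/-- `Q` is obtained from `P` by a δ-rotation at some valley. -/
def DRot (δ P Q : List ℕ) : Prop := ∃ i, IsDeltaRotation δ P Q i

/-- The alt ν-Tamari order: reflexive transitive closure of δ-rotations. -/
def altLE (δ : List ℕ) : List ℕ → List ℕ → Prop := Relation.ReflTransGen (DRot δ)

/-- The path ν̌ = (ν̌_0, δ_1, …, δ_n) with ν̌_0 = Σν_i − Σδ_i. -/
def nuCheck (ν δ : List ℕ) : List ℕ := (ν.sum - δ.sum) :: δ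

/-- `μ'` is the ω-rotation (in the sense of the ν-Tamari lattice, defined via
the ω-altitude `alt_ω(x,y) = ω_0 + ⋯ + ω_y − x`) of `μ` at the valley preceding
the `(i+1)`-st north step: the east step of the valley is exchanged with the
subpath from the valley to the next lattice point of the same ω-altitude,
which ends in block `k`. -/
def IsNuRotation (ω μ μ' : List ℕ) (i : ℕ) : Prop :=
  i + 1 < μ.length ∧ 1 ≤ μ.getD i 0 ∧
  ∃ k, i < k ∧ k < μ.length ∧
    (ω.take (k + 1)).sum + (μ.take (i + 1)).sum ≤
      (ω.take (i + 1)).sum + (μ.take (k + 1)).sum ∧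
    (∀ k', i < k' → k' < k →
      (ω.take (i + 1)).sum + (μ.take (k' + 1)).sum <
        (ω.take (k' + 1)).sum + (μ.take (i + 1)).sum) ∧
    μ' = (μ.set i (μ.getD i 0 - 1)).set k (μ.getD k 0 + 1)

/-- The ω-Tamari order on ω-paths: closure of ω-rotations. -/
def tamLE (ω : List ℕ) : List ℕ → List ℕ → Prop :=
  Relation.ReflTransGen (fun P Q => ∃ i, IsNuRotation ω P Q i)

/-- Covering relation of the alt ν-Tamari poset `T_ν(δ)`. -/
def altCovBy (ν δ P Q : List ℕ) : Prop :=
  IsNuPath ν P ∧ IsNuPath ν Q ∧ altLE δ P Q ∧ P ≠ Q ∧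
    ∀ R, IsNuPath ν R → altLE δ P R → altLE δ R Q → R = P ∨ R = Q

/-- `[P,Q]` is a linear interval of length `ℓ` in the alt ν-Tamari poset. -/
def IsAltLinear (ν δ P Q : List ℕ) (ℓ : ℕ) : Prop :=
  IsNuPath ν P ∧ IsNuPath ν Q ∧ altLE δ P Q ∧
  (∀ R S, IsNuPath ν R → IsNuPath ν S → altLE δ P R → altLE δ R Q →
    altLE δ P S → altLE δ S Q → altLE δ R S ∨ altLE δ S R) ∧
  ∃ c : ℕ → List ℕ, c 0 = P ∧ c ℓ = Q ∧ ∀ k, k < ℓ → altCovBy ν δ (c k) (c (k + 1))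

/-! ### ω-trees -/

/-- The lattice points of the Ferrers diagram `F_ω` weakly above `ω`:
points `(x,y)` with `0 ≤ y ≤ n` and `x ≤ ω_0 + ⋯ + ω_y`. -/
def Lpts (ω : List ℕ) : Set (ℕ × ℕ) :=
  {p : ℕ × ℕ | p.2 < ω.length ∧ p.1 ≤ (ω.take (p.2 + 1)).sum}

/-- `p` and `q` are ω-incompatible: one is strictly southwest of the other and
the smallest rectangle containing them lies in `F_ω` (equivalently, its
bottom-right corner is a lattice point of `F_ω`). -/
def Incomp (ω : List ℕ) (p q : ℕ × ℕ) : Prop :=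
  ((p.1 < q.1 ∧ p.2 < q.2) ∨ (q.1 < p.1 ∧ q.2 < p.2)) ∧
    (max p.1 q.1, min p.2 q.2) ∈ Lpts ω

/-- All elements of `T` are pairwise ω-compatible. -/
def PairwiseCompat (ω : List ℕ) (T : Set (ℕ × ℕ)) : Prop :=
  ∀ p ∈ T, ∀ q ∈ T, ¬ Incomp ω p q

/-- An ω-tree: a maximal collection of pairwise ω-compatible points of `L_ω`. -/
def IsTree (ω : List ℕ) (T : Set (ℕ × ℕ)) : Prop :=
  T ⊆ Lpts ω ∧ PairwiseCompat ω T ∧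
    ∀ T', T ⊆ T' → T' ⊆ Lpts ω → PairwiseCompat ω T' → T' = T

/-- The ω-rotation of `T` at `q`: there are `p, r ∈ T` with `q` the lower-left
corner of the rectangle `p□r` (so `p` is above `q` in its column and `r` to the
right of `q` in its row), no other element of `T` lies in `p□r`, and `T'` is
obtained by replacing `q` by the upper-right corner of `p□r`. -/
def RotationAt (ω : List ℕ) (T : Set (ℕ × ℕ)) (q : ℕ × ℕ) (T' : Set (ℕ × ℕ)) : Prop :=
  ∃ p r, p ∈ T ∧ q ∈ T ∧ r ∈ T ∧ p.1 = q.1 ∧ q.2 < p.2 ∧ r.2 = q.2 ∧ q.1 < r.1 ∧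
    (∀ s ∈ T, q.1 ≤ s.1 → s.1 ≤ r.1 → q.2 ≤ s.2 → s.2 ≤ p.2 → s = p ∨ s = q ∨ s = r) ∧
    T' = insert (r.1, p.2) (T \ {q})

/-- `T'` is obtained from `T` by an ω-rotation. -/
def TreeRotation (ω : List ℕ) (T T' : Set (ℕ × ℕ)) : Prop := ∃ q, RotationAt ω T q T'

/-- One rotation step between ω-trees. -/
def tRot (ω : List ℕ) (T T' : Set (ℕ × ℕ)) : Prop :=
  IsTree ω T ∧ IsTree ω T' ∧ TreeRotation ω T T'

/-- The rotation order on ω-trees. -/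
def treeLE (ω : List ℕ) : Set (ℕ × ℕ) → Set (ℕ × ℕ) → Prop :=
  Relation.ReflTransGen (tRot ω)

/-- Covering relation of the rotation poset of ω-trees. -/
def treeCovBy (ω : List ℕ) (T T' : Set (ℕ × ℕ)) : Prop :=
  IsTree ω T ∧ IsTree ω T' ∧ treeLE ω T T' ∧ T ≠ T' ∧
    ∀ R, IsTree ω R → treeLE ω T R → treeLE ω R T' → R = T ∨ R = T'

/-- `[T,T']` is a linear interval of length `ℓ` in the rotation poset of ω-trees. -/
def IsTreeLinear (ω : List ℕ) (T T' : Set (ℕ × ℕ)) (ℓ : ℕ) : Prop :=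
  IsTree ω T ∧ IsTree ω T' ∧ treeLE ω T T' ∧
  (∀ R S, IsTree ω R → IsTree ω S → treeLE ω T R → treeLE ω R T' →
    treeLE ω T S → treeLE ω S T' → treeLE ω R S ∨ treeLE ω S R) ∧
  ∃ c : ℕ → Set (ℕ × ℕ), c 0 = T ∧ c ℓ = T' ∧ ∀ k, k < ℓ → treeCovBy ω (c k) (c (k + 1))

/-- `q 0, …, q ℓ` is a sequence of consecutive nodes of `T` in the same row,
ordered from left to right. -/
def ConsecRow (T : Set (ℕ × ℕ)) (q : ℕ → ℕ × ℕ) (ℓ : ℕ) : Prop :=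
  (∀ i, i ≤ ℓ → q i ∈ T) ∧ (∀ i, i ≤ ℓ → (q i).2 = (q 0).2) ∧
  (∀ i, i < ℓ → (q i).1 < (q (i + 1)).1) ∧
  (∀ i, i < ℓ → ∀ s ∈ T, s.2 = (q 0).2 → (q i).1 < s.1 → s.1 < (q (i + 1)).1 → False)

/-- `q 0, …, q ℓ` is a sequence of consecutive nodes of `T` in the same column,
ordered from bottom to top. -/
def ConsecCol (T : Set (ℕ × ℕ)) (q : ℕ → ℕ × ℕ) (ℓ : ℕ) : Prop :=
  (∀ i, i ≤ ℓ → q i ∈ T) ∧ (∀ i, i ≤ ℓ → (q i).1 = (q 0).1) ∧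
  (∀ i, i < ℓ → (q i).2 < (q (i + 1)).2) ∧
  (∀ i, i < ℓ → ∀ s ∈ T, s.1 = (q 0).1 → (q i).2 < s.2 → s.2 < (q (i + 1)).2 → False)

/-- `[T,T']` is a left interval of length `ℓ` in the rotation poset of ω-trees:
`T'` is obtained from `T` by applying `ℓ > 0` successive rotations at the first
`ℓ` nodes of a sequence `q 0, …, q ℓ` of consecutive nodes of `T` in the same
row, from left to right. -/
def IsLeftTreeItv (ω : List ℕ) (T T' : Set (ℕ × ℕ)) (ℓ : ℕ) : Prop :=
  IsTree ω T ∧ 1 ≤ ℓ ∧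
  ∃ q : ℕ → ℕ × ℕ, ConsecRow T q ℓ ∧
    ∃ c : ℕ → Set (ℕ × ℕ), c 0 = T ∧ c ℓ = T' ∧
      ∀ k, k < ℓ → RotationAt ω (c k) (q k) (c (k + 1))

/-- `[T,T']` is a right interval of length `ℓ` in the rotation poset of ω-trees:
`T'` is obtained from `T` by applying `ℓ > 0` successive rotations at the first
`ℓ` nodes of a sequence `q 0, …, q ℓ` of consecutive nodes of `T` in the same
column, from bottom to top. -/
def IsRightTreeItv (ω : List ℕ) (T T' : Set (ℕ × ℕ)) (ℓ : ℕ) : Prop :=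
  IsTree ω T ∧ 1 ≤ ℓ ∧
  ∃ q : ℕ → ℕ × ℕ, ConsecCol T q ℓ ∧
    ∃ c : ℕ → Set (ℕ × ℕ), c 0 = T ∧ c ℓ = T' ∧
      ∀ k, k < ℓ → RotationAt ω (c k) (q k) (c (k + 1))

/-! ### (δ,ν)-trees -/

/-- The lattice points `L_{δ,ν}` of the shape `F_{δ,ν}`: points of `L_ν̌` lying
weakly above the path ν̂ = W^{ν_0} N W^{ν_1−δ_1} ⋯ N W^{ν_n−δ_n} starting at
`(ν̌_0, 0)`.  At height `y` these are the `x` with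
`ν̌_0 − ν_0 − Σ_{i≤y}(ν_i−δ_i) ≤ x ≤ ν̌_0 + δ_1 + ⋯ + δ_y`, written here without
natural subtraction. -/
def Ldn (ν δ : List ℕ) : Set (ℕ × ℕ) :=
  {p : ℕ × ℕ | p.2 < ν.length ∧
    ν.sum ≤ p.1 + (ν.take (p.2 + 1)).sum + (δ.drop p.2).sum ∧
    p.1 ≤ ((nuCheck ν δ).take (p.2 + 1)).sum}

/-- A (δ,ν)-tree: a maximal collection of pairwise ν̌-compatible points of `L_{δ,ν}`. -/
def IsDNTree (ν δ : List ℕ) (T : Set (ℕ × ℕ)) : Prop :=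
  T ⊆ Ldn ν δ ∧ PairwiseCompat (nuCheck ν δ) T ∧
    ∀ T', T ⊆ T' → T' ⊆ Ldn ν δ → PairwiseCompat (nuCheck ν δ) T' → T' = T

/-- One ν̌-rotation step between (δ,ν)-trees. -/
def dnRot (ν δ : List ℕ) (T T' : Set (ℕ × ℕ)) : Prop :=
  IsDNTree ν δ T ∧ IsDNTree ν δ T' ∧ TreeRotation (nuCheck ν δ) T T'

/-- The rotation order on (δ,ν)-trees. -/
def dnLE (ν δ : List ℕ) : Set (ℕ × ℕ) → Set (ℕ × ℕ) → Prop :=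
  Relation.ReflTransGen (dnRot ν δ)

/-- Covering relation of the rotation poset of (δ,ν)-trees. -/
def dnCovBy (ν δ : List ℕ) (T T' : Set (ℕ × ℕ)) : Prop :=
  IsDNTree ν δ T ∧ IsDNTree ν δ T' ∧ dnLE ν δ T T' ∧ T ≠ T' ∧
    ∀ R, IsDNTree ν δ R → dnLE ν δ T R → dnLE ν δ R T' → R = T ∨ R = T'

/-- `[T,T']` is a left interval of length `ℓ` in the rotation poset of (δ,ν)-trees. -/
def IsLeftDNItv (ν δ : List ℕ) (T T' : Set (ℕ × ℕ)) (ℓ : ℕ) : Prop :=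
  IsDNTree ν δ T ∧ 1 ≤ ℓ ∧
  ∃ q : ℕ → ℕ × ℕ, ConsecRow T q ℓ ∧
    ∃ c : ℕ → Set (ℕ × ℕ), c 0 = T ∧ c ℓ = T' ∧
      ∀ k, k < ℓ → RotationAt (nuCheck ν δ) (c k) (q k) (c (k + 1))

/-- `[T,T']` is a right interval of length `ℓ` in the rotation poset of (δ,ν)-trees. -/
def IsRightDNItv (ν δ : List ℕ) (T T' : Set (ℕ × ℕ)) (ℓ : ℕ) : Prop :=
  IsDNTree ν δ T ∧ 1 ≤ ℓ ∧
  ∃ q : ℕ → ℕ × ℕ, ConsecCol T q ℓ ∧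
    ∃ c : ℕ → Set (ℕ × ℕ), c 0 = T ∧ c ℓ = T' ∧
      ∀ k, k < ℓ → RotationAt (nuCheck ν δ) (c k) (q k) (c (k + 1))

/-! ### Row vectors, column vectors, reduced column vectors -/

/-- Number of points of `T` at height `y`. -/
noncomputable def rowN (T : Set (ℕ × ℕ)) (y : ℕ) : ℕ := {p ∈ T | p.2 = y}.ncard

/-- Number of points of `T` in column `x`. -/
noncomputable def colTN (T : Set (ℕ × ℕ)) (x : ℕ) : ℕ := {p ∈ T | p.1 = x}.ncard

/-- Number of points of `L_{δ,ν}` in column `x`. -/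
noncomputable def colN (ν δ : List ℕ) (x : ℕ) : ℕ := {p ∈ Ldn ν δ | p.1 = x}.ncard

/-- `p` is a relevant point of `L_{δ,ν}`: it is not the leftmost point of its row. -/
def Relevant (ν δ : List ℕ) (p : ℕ × ℕ) : Prop :=
  p ∈ Ldn ν δ ∧ ∃ q ∈ Ldn ν δ, q.2 = p.2 ∧ q.1 < p.1

/-- Number of relevant points of `L_{δ,ν}` in column `x` (the reduced column at `x`). -/
noncomputable def rcolN (ν δ : List ℕ) (x : ℕ) : ℕ := {p ∈ Ldn ν δ | p.1 = x ∧ Relevant ν δ p}.ncard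

/-- Number of points of `T` in the reduced column at `x`. -/
noncomputable def rcolTN (ν δ : List ℕ) (T : Set (ℕ × ℕ)) (x : ℕ) : ℕ :=
  {p ∈ T | p.1 = x ∧ Relevant ν δ p}.ncard

/-- `j` lists the columns `j 0, …, j m` of `L_{δ,ν}` from shortest to longest,
reading from right to left among columns of equal length (here `m = ν.sum`). -/
def ColOrder (ν δ : List ℕ) (j : ℕ → ℕ) : Prop :=
  (∀ i, i ≤ ν.sum → j i ≤ ν.sum) ∧
  (∀ i i', i ≤ ν.sum → i' ≤ ν.sum → j i = j i' → i = i') ∧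
  (∀ i i', i < i' → i' ≤ ν.sum →
    colN ν δ (j i) < colN ν δ (j i') ∨ (colN ν δ (j i) = colN ν δ (j i') ∧ j i' < j i))

/-- `j` lists the reduced columns `j 0, …, j (m-1)` of `L_{δ,ν}` from shortest to
longest, reading from right to left among reduced columns of equal length. -/
def RColOrder (ν δ : List ℕ) (j : ℕ → ℕ) : Prop :=
  (∀ i, i < ν.sum → 1 ≤ j i ∧ j i ≤ ν.sum) ∧
  (∀ i i', i < ν.sum → i' < ν.sum → j i = j i' → i = i') ∧
  (∀ i i', i < i' → i' < ν.sum →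
    rcolN ν δ (j i) < rcolN ν δ (j i') ∨ (rcolN ν δ (j i) = rcolN ν δ (j i') ∧ j i' < j i))

/-- The entry `←ν_i` of the reversed path of `ν`: the number of north steps of
`ν` in column `m − i`. -/
def revNu (ν : List ℕ) (i : ℕ) : ℕ :=
  ((Finset.Ico 1 ν.length).filter (fun t => (ν.take t).sum + i = ν.sum)).card

namespace DNF
/-! ### topk theory -/
def rnk (A : Finset ℕ) (x : ℕ) : ℕ := (A.filter (fun z => x < z)).card

def topk (A : Finset ℕ) (c : ℕ) : Finset ℕ := A.filter (fun x => rnk A x < c)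

lemma topk_subset (A : Finset ℕ) (c : ℕ) : topk A c ⊆ A := Finset.filter_subset _ _

lemma rnk_lt_of_lt {A : Finset ℕ} {x z : ℕ} (hz : z ∈ A) (h : x < z) :
    rnk A z < rnk A x := by
  apply Finset.card_lt_card
  constructor
  · intro w hw
    simp only [Finset.mem_filter] at hw ⊢
    exact ⟨hw.1, h.trans hw.2⟩
  · intro hsub
    have : z ∈ A.filter (fun w => x < w) := by simp [h, hz]
    have := hsub this
    simp at this
lemma rnk_anti {A : Finset ℕ} {x z : ℕ} (h : x ≤ z) : rnk A z ≤ rnk A x := by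
  apply Finset.card_le_card
  intro w hw
  simp only [Finset.mem_filter] at hw ⊢
  exact ⟨hw.1, by omega⟩

lemma lt_of_rnk_lt {A : Finset ℕ} {x z : ℕ} (h : rnk A x < rnk A z) :
    z < x := by
  by_contra hc
  exact absurd (rnk_anti (A := A) (show x ≤ z by omega)) (by omega)

lemma rnk_lt_card {A : Finset ℕ} {x : ℕ} (hx : x ∈ A) : rnk A x < A.card := by
  have h1 : A.filter (fun z => x < z) ⊆ A.erase x := by
    intro w hw
    simp only [Finset.mem_filter] at hw
    exact Finset.mem_erase.2 ⟨by omega, hw.1⟩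
  calc rnk A x ≤ (A.erase x).card := Finset.card_le_card h1
    _ < A.card := Finset.card_erase_lt_of_mem hx

lemma rnk_injOn {A : Finset ℕ} : Set.InjOn (rnk A) A := by
  intro x hx y hy h
  simp only [Finset.mem_coe] at hx hy
  rcases lt_trichotomy x y with h1 | h1 | h1
  · exact absurd (rnk_lt_of_lt hy h1) (by omega)
  · exact h1
  · exact absurd (rnk_lt_of_lt hx h1) (by omega)

lemma image_rnk (A : Finset ℕ) : A.image (rnk A) = Finset.range A.card := by
  apply Finset.eq_of_subset_of_card_le
  · intro r hr
    simp only [Finset.mem_image] at hr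
    obtain ⟨x, hx, rfl⟩ := hr
    exact Finset.mem_range.2 (rnk_lt_card hx)
  · rw [Finset.card_range, Finset.card_image_of_injOn rnk_injOn]

lemma rnk_surj {A : Finset ℕ} {r : ℕ} (hr : r < A.card) : ∃ x ∈ A, rnk A x = r := by
  have : r ∈ A.image (rnk A) := by rw [image_rnk]; exact Finset.mem_range.2 hr
  simpa using this

lemma card_topk (A : Finset ℕ) (c : ℕ) : (topk A c).card = min c A.card := by
  rw [← Finset.card_range (min c A.card)]
  apply Finset.card_bij (fun x _ => rnk A x)
  · intro x hx
    simp only [topk, Finset.mem_filter] at hx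
    exact Finset.mem_range.2 (lt_min hx.2 (rnk_lt_card hx.1))
  · intro x hx y hy h
    exact rnk_injOn (topk_subset A c hx) (topk_subset A c hy) h
  · intro r hr
    simp only [Finset.mem_range, lt_min_iff] at hr
    obtain ⟨x, hx, rfl⟩ := rnk_surj hr.2
    exact ⟨x, Finset.mem_filter.2 ⟨hx, hr.1⟩, rfl⟩


lemma mem_topk {A : Finset ℕ} {c x : ℕ} (hx : x ∈ A) : x ∈ topk A c ↔ rnk A x < c := by
  simp [topk, hx]

lemma topk_upset {A : Finset ℕ} {c x z : ℕ} (hx : x ∈ topk A c) (hz : z ∈ A)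
    (hxz : x ≤ z) : z ∈ topk A c := by
  simp only [topk, Finset.mem_filter] at hx ⊢
  refine ⟨hz, ?_⟩
  rcases eq_or_lt_of_le hxz with rfl | h
  · exact hx.2
  · exact (rnk_lt_of_lt hz h).trans hx.2

lemma lt_of_not_topk {A : Finset ℕ} {c x w : ℕ} (hx : x ∈ A) (hxn : x ∉ topk A c)
    (hw : w ∈ topk A c) : x < w := by
  have h1 : ¬ rnk A x < c := fun h => hxn (Finset.mem_filter.2 ⟨hx, h⟩)
  have h2 : rnk A w < c := (Finset.mem_filter.1 hw).2
  exact lt_of_rnk_lt (show rnk A w < rnk A x by omega)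

lemma topk_eq_self {A : Finset ℕ} {c : ℕ} (h : A.card ≤ c) : topk A c = A := by
  apply Finset.eq_of_subset_of_card_le (topk_subset A c)
  rw [card_topk]; omega

/-- An up-set of the right cardinality is `topk`. -/
lemma upset_eq_topk {A U : Finset ℕ} {c : ℕ} (hUA : U ⊆ A)
    (hup : ∀ u ∈ U, ∀ x ∈ A, u ≤ x → x ∈ U) (hcard : U.card = min c A.card) :
    U = topk A c := by
  ext x
  simp only [topk, Finset.mem_filter]
  constructor
  · intro hxU
    refine ⟨hUA hxU, ?_⟩
    have h1 : A.filter (fun z => x < z) ⊆ U.erase x := by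
      intro w hw
      simp only [Finset.mem_filter] at hw
      exact Finset.mem_erase.2 ⟨by omega, hup x hxU w hw.1 (le_of_lt hw.2)⟩
    have h2 : rnk A x ≤ U.card - 1 := by
      have := Finset.card_le_card h1
      have := Finset.card_erase_of_mem hxU
      unfold rnk; omega
    have h3 : 1 ≤ U.card := Finset.card_pos.2 ⟨x, hxU⟩
    omega
  · rintro ⟨hxA, hr⟩
    by_contra hxU
    have hsub : U ⊆ A.filter (fun z => x < z) := by
      intro u hu
      refine Finset.mem_filter.2 ⟨hUA hu, ?_⟩
      rcases lt_or_ge x u with h | h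
      · exact h
      · exact absurd (hup u hu x hxA h) hxU
    have := Finset.card_le_card hsub
    have := rnk_lt_card hxA
    unfold rnk at *; omega

/-! ### Arithmetic of the shape -/

/-- sum of getD over an initial range equals sum of take -/
lemma take_sum_eq (l : List ℕ) (j : ℕ) :
    (l.take j).sum = ∑ t ∈ Finset.range j, l.getD t 0 := by
  induction j with
  | zero => simp
  | succ j ih =>
    rw [Finset.sum_range_succ, ← ih, List.take_succ, List.sum_append]
    congr 1
    rcases lt_or_ge j l.length with h | h
    · simp [List.getElem?_eq_getElem h, List.getD_eq_getElem l 0 h]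
    · simp [List.getElem?_eq_none h, List.getD_eq_default _ _ h]

lemma take_sum_succ (l : List ℕ) (j : ℕ) :
    (l.take (j+1)).sum = (l.take j).sum + l.getD j 0 := by
  rw [take_sum_eq, take_sum_eq, Finset.sum_range_succ]

lemma take_sum_all (l : List ℕ) (j : ℕ) (h : l.length ≤ j) :
    (l.take j).sum = l.sum := by
  rw [List.take_of_length_le h]

section Shape

/-- first coordinate of top path at height y -/
def Sf (ν δ : List ℕ) (y : ℕ) : ℕ := (ν.sum - δ.sum) + ∑ t ∈ Finset.range y, δ.getD t 0

/-- remaining delta sum -/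
def Ddrop (ν δ : List ℕ) (y : ℕ) : ℕ := ∑ t ∈ Finset.Ico y δ.length, δ.getD t 0

def Vf (ν δ : List ℕ) (y : ℕ) : ℕ := ∑ t ∈ Finset.range (y+1), ν.getD t 0

def Bf (ν δ : List ℕ) (y : ℕ) : ℕ :=
  (∑ t ∈ Finset.Ico (y+1) ν.length, ν.getD t 0) - Ddrop ν δ y

variable {ν δ : List ℕ}

lemma delta_le_nu (hδ : IsIncrement ν δ) : ∀ t, δ.getD t 0 ≤ ν.getD (t+1) 0 := by
  intro t
  rcases lt_or_ge t δ.length with h | h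
  · exact hδ.2 t h
  · rw [List.getD_eq_default _ _ h]; exact Nat.zero_le _

lemma range_getD_sum (l : List ℕ) (y : ℕ) (h : l.length ≤ y) :
    ∑ t ∈ Finset.range y, l.getD t 0 = l.sum := by
  rw [← take_sum_eq, take_sum_all _ _ h]

lemma split_sum (l : List ℕ) (y : ℕ) :
    (∑ t ∈ Finset.range y, l.getD t 0) + (∑ t ∈ Finset.Ico y l.length, l.getD t 0) = l.sum := by
  rcases le_or_gt y l.length with h | h
  · rw [Finset.range_eq_Ico, Finset.sum_Ico_consecutive _ (Nat.zero_le y) h,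
      ← Finset.range_eq_Ico, range_getD_sum _ _ le_rfl]
  · rw [Finset.Ico_eq_empty (by omega), Finset.sum_empty, range_getD_sum _ _ (by omega), add_zero]

lemma Ddrop_le_tail (hδ : IsIncrement ν δ) (y : ℕ) :
    Ddrop ν δ y ≤ ∑ t ∈ Finset.Ico (y+1) ν.length, ν.getD t 0 := by
  unfold Ddrop
  have he : ∑ t ∈ Finset.Ico y δ.length, δ.getD t 0
      = ∑ t ∈ Finset.Ico (y+1) (δ.length+1), δ.getD (t-1) 0 := by
    rw [Finset.sum_Ico_eq_sum_range, Finset.sum_Ico_eq_sum_range]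
    have hr : δ.length + 1 - (y+1) = δ.length - y := by omega
    rw [hr]
    apply Finset.sum_congr rfl
    intro i _; congr 1; omega
  rw [he, hδ.1]
  apply Finset.sum_le_sum
  intro t ht
  simp only [Finset.mem_Ico] at ht
  have h2 := delta_le_nu hδ (t-1)
  have h3 : t - 1 + 1 = t := by omega
  rw [h3] at h2
  exact h2

lemma Ddrop_le (hδ : IsIncrement ν δ) (y : ℕ) : Ddrop ν δ y + Vf ν δ y ≤ ν.sum := by
  have h1 := Ddrop_le_tail hδ y
  have h2 := split_sum ν (y+1)
  unfold Vf
  omega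

lemma delta_sum_le (hδ : IsIncrement ν δ) : δ.sum ≤ ν.sum := by
  have h1 := Ddrop_le hδ 0
  have h2 := split_sum δ 0
  unfold Ddrop Vf at *
  simp only [Finset.range_zero, Finset.sum_empty, Finset.range_one, zero_add] at h2
  omega

lemma Bf_add (hδ : IsIncrement ν δ) (y : ℕ) :
    Bf ν δ y + Ddrop ν δ y + Vf ν δ y = ν.sum := by
  have h1 := Ddrop_le hδ y
  have h2 := split_sum ν (y+1)
  have h3 := Ddrop_le_tail hδ y
  unfold Bf Vf at *
  omega

lemma Sf_add (hδ : IsIncrement ν δ) (y : ℕ) : Sf ν δ y + Ddrop ν δ y = ν.sum := by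
  have h1 := split_sum δ y
  have h2 := delta_sum_le hδ
  unfold Sf Ddrop at *
  omega

lemma nuCheck_take_sum (y : ℕ) : ((nuCheck ν δ).take (y+1)).sum = Sf ν δ y := by
  unfold nuCheck Sf
  rw [List.take_succ_cons, List.sum_cons, take_sum_eq]

lemma Sf_le_total (hδ : IsIncrement ν δ) (y : ℕ) : Sf ν δ y ≤ ν.sum := by
  have := Sf_add hδ y
  omega

lemma Bf_le_Sf (hδ : IsIncrement ν δ) (y : ℕ) : Bf ν δ y + Vf ν δ y = Sf ν δ y := by
  have := Bf_add hδ y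
  have := Sf_add hδ y
  omega

lemma Vf_succ (y : ℕ) : Vf ν δ (y+1) = Vf ν δ y + ν.getD (y+1) 0 := by
  unfold Vf; rw [Finset.sum_range_succ]

lemma Sf_succ (y : ℕ) : Sf ν δ (y+1) = Sf ν δ y + δ.getD y 0 := by
  unfold Sf; rw [Finset.sum_range_succ]; ring

lemma Bf_succ (hδ : IsIncrement ν δ) (y : ℕ) :
    Bf ν δ (y+1) + (ν.getD (y+1) 0 - δ.getD y 0) = Bf ν δ y := by
  have h1 := Bf_add hδ y
  have h2 := Bf_add hδ (y+1)
  have h3 := Vf_succ (ν := ν) (δ := δ) y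
  have h4 := Sf_succ (ν := ν) (δ := δ) y
  have h5 := Bf_le_Sf hδ y
  have h6 := Bf_le_Sf hδ (y+1)
  have h7 := delta_le_nu hδ y
  omega

lemma Bf_anti (hδ : IsIncrement ν δ) {y z : ℕ} (h : y ≤ z) : Bf ν δ z ≤ Bf ν δ y := by
  induction z with
  | zero =>
    have : y = 0 := by omega
    subst this; exact le_rfl
  | succ z ih =>
    rcases Nat.lt_or_ge y (z+1) with h1 | h1
    · have := ih (by omega)
      have := Bf_succ hδ z
      omega
    · have : y = z + 1 := by omega
      subst this; exact le_rfl

lemma Sf_mono {y z : ℕ} (h : y ≤ z) : Sf ν δ y ≤ Sf ν δ z := by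
  induction z with
  | zero =>
    have : y = 0 := by omega
    subst this; exact le_rfl
  | succ z ih =>
    rcases Nat.lt_or_ge y (z+1) with h1 | h1
    · have := ih (by omega)
      have := Sf_succ (ν := ν) (δ := δ) z
      omega
    · have : y = z + 1 := by omega
      subst this; exact le_rfl

lemma drop_sum_eq (l : List ℕ) (y : ℕ) :
    (l.drop y).sum = ∑ t ∈ Finset.Ico y l.length, l.getD t 0 := by
  have h4 : (l.take y).sum + (l.drop y).sum = l.sum := by
    rw [← List.sum_append, List.take_append_drop]
  have h5 := take_sum_eq l y
  have h6 := split_sum l y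
  omega

lemma mem_Ldn (hδ : IsIncrement ν δ) {x y : ℕ} :
    (x, y) ∈ Ldn ν δ ↔ y < ν.length ∧ Bf ν δ y ≤ x ∧ x ≤ Sf ν δ y := by
  unfold Ldn
  simp only [Set.mem_setOf_eq]
  have e1 := Bf_add hδ y
  have e2 : (ν.take (y+1)).sum = Vf ν δ y := take_sum_eq _ _
  have e3 : (δ.drop y).sum = Ddrop ν δ y := drop_sum_eq δ y
  rw [nuCheck_take_sum]
  constructor
  · rintro ⟨h1, h2, h3⟩
    exact ⟨h1, by omega, h3⟩
  · rintro ⟨h1, h2, h3⟩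
    exact ⟨h1, by omega, h3⟩

lemma nuCheck_length (hδ : IsIncrement ν δ) : (nuCheck ν δ).length = ν.length := by
  unfold nuCheck
  simp [hδ.1]

lemma mem_Lpts_check (hδ : IsIncrement ν δ) {a b : ℕ} :
    (a, b) ∈ Lpts (nuCheck ν δ) ↔ b < ν.length ∧ a ≤ Sf ν δ b := by
  unfold Lpts
  rw [Set.mem_setOf_eq, nuCheck_length hδ, nuCheck_take_sum]

lemma incomp_iff (hδ : IsIncrement ν δ) {p q : ℕ × ℕ} :
    Incomp (nuCheck ν δ) p q ↔
      ((p.1 < q.1 ∧ p.2 < q.2) ∨ (q.1 < p.1 ∧ q.2 < p.2)) ∧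
        min p.2 q.2 < ν.length ∧ max p.1 q.1 ≤ Sf ν δ (min p.2 q.2) := by
  unfold Incomp
  rw [show ((max p.1 q.1, min p.2 q.2) ∈ Lpts (nuCheck ν δ)) ↔ _ from mem_Lpts_check hδ]

lemma incomp_mk (hδ : IsIncrement ν δ) {x1 y1 x2 y2 : ℕ} (h1 : x1 < x2) (h2 : y1 < y2)
    (h3 : x2 ≤ Sf ν δ y1) (h4 : y1 < ν.length) :
    Incomp (nuCheck ν δ) (x1, y1) (x2, y2) := by
  rw [incomp_iff hδ]
  dsimp only
  rw [min_eq_left h2.le, max_eq_right h1.le]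
  exact ⟨Or.inl ⟨h1, h2⟩, by omega, h3⟩

lemma incomp_comm {ω : List ℕ} {p q : ℕ × ℕ} (h : Incomp ω p q) : Incomp ω q p := by
  unfold Incomp at *
  rw [max_comm q.1 p.1, min_comm q.2 p.2]
  tauto

end Shape

/-! ### Row systems -/

section Rows

open Classical in
noncomputable def Aof (ν δ : List ℕ) (R : ℕ → Finset ℕ) (y : ℕ) : Finset ℕ :=
  (Finset.Icc (Bf ν δ y) (Sf ν δ y)).filter
    (fun x => ∀ y1 < y, ∀ x1 ∈ R y1, ¬(x1 < x ∧ x ≤ Sf ν δ y1))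

variable {ν δ : List ℕ} {R : ℕ → Finset ℕ}

lemma mem_Aof {y x : ℕ} :
    x ∈ Aof ν δ R y ↔ (Bf ν δ y ≤ x ∧ x ≤ Sf ν δ y) ∧
      ∀ y1 < y, ∀ x1 ∈ R y1, ¬(x1 < x ∧ x ≤ Sf ν δ y1) := by
  unfold Aof
  simp [Finset.mem_filter, Finset.mem_Icc]

lemma Aof_congr {R' : ℕ → Finset ℕ} {y : ℕ} (h : ∀ y1 < y, R y1 = R' y1) :
    Aof ν δ R y = Aof ν δ R' y := by
  ext x
  rw [mem_Aof, mem_Aof]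
  constructor <;> rintro ⟨h1, h2⟩ <;> refine ⟨h1, fun y1 hy1 x1 hx1 => ?_⟩
  · exact h2 y1 hy1 x1 (by rw [h y1 hy1]; exact hx1)
  · exact h2 y1 hy1 x1 (by rw [← h y1 hy1]; exact hx1)

/-- hypotheses on rows `0..y` -/
structure RowsOK (ν δ : List ℕ) (R : ℕ → Finset ℕ) (y : ℕ) : Prop where
  sub : ∀ y1 ≤ y, R y1 ⊆ Aof ν δ R y1
  ne : ∀ y1 ≤ y, (R y1).Nonempty
  up : ∀ y1 ≤ y, ∀ u ∈ R y1, ∀ x ∈ Aof ν δ R y1, u ≤ x → x ∈ R y1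

lemma RowsOK.mono {y z : ℕ} (h : RowsOK ν δ R y) (hz : z ≤ y) : RowsOK ν δ R z :=
  ⟨fun y1 h1 => h.sub y1 (h1.trans hz), fun y1 h1 => h.ne y1 (h1.trans hz),
   fun y1 h1 => h.up y1 (h1.trans hz)⟩

/-- the part of row `y` that stays available at row `y+1` -/
noncomputable def midset (ν δ : List ℕ) (R : ℕ → Finset ℕ) (y : ℕ) : Finset ℕ :=
  (Aof ν δ R y).filter (fun z => ∀ w ∈ R y, z ≤ w)

lemma midset_eq (h : RowsOK ν δ R y) :
    midset ν δ R y = Aof ν δ R y \ ((R y).erase ((R y).min' (h.ne y le_rfl))) := by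
  set m := (R y).min' (h.ne y le_rfl) with hm
  have hmR : m ∈ R y := (R y).min'_mem _
  ext z
  simp only [midset, Finset.mem_filter, Finset.mem_sdiff, Finset.mem_erase]
  constructor
  · rintro ⟨hzA, hzle⟩
    refine ⟨hzA, fun hc => ?_⟩
    have h1 := (R y).min'_le z hc.2
    have h2 := hzle m hmR
    exact hc.1 (by omega)
  · rintro ⟨hzA, hz⟩
    refine ⟨hzA, fun w hw => ?_⟩
    by_contra hlt
    push_neg at hlt
    have hmw := (R y).min'_le w hw
    have hzR : z ∈ R y := h.up y le_rfl m hmR z hzA (by omega)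
    exact hz ⟨by omega, hzR⟩

lemma decomp (hδ : IsIncrement ν δ) (h : RowsOK ν δ R y) :
    Aof ν δ R (y+1) =
      (Finset.Ico (Bf ν δ (y+1)) (Bf ν δ y)) ∪ midset ν δ R y ∪
        Finset.Ioc (Sf ν δ y) (Sf ν δ (y+1)) := by
  have hBS := Bf_le_Sf hδ y
  have hBS1 := Bf_le_Sf hδ (y+1)
  have hBa : Bf ν δ (y+1) ≤ Bf ν δ y := Bf_anti hδ (by omega)
  have hSm : Sf ν δ y ≤ Sf ν δ (y+1) := Sf_mono (by omega)
  ext x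
  simp only [Finset.mem_union, Finset.mem_Ico, Finset.mem_Ioc, midset, Finset.mem_filter]
  constructor
  · intro hx
    rw [mem_Aof] at hx
    obtain ⟨⟨hx1, hx2⟩, hbl⟩ := hx
    rcases lt_or_ge x (Bf ν δ y) with h1 | h1
    · left; left; omega
    rcases le_or_gt x (Sf ν δ y) with h2 | h2
    · left; right
      constructor
      · rw [mem_Aof]
        exact ⟨⟨h1, h2⟩, fun y1 hy1 x1 hx1 => hbl y1 (by omega) x1 hx1⟩
      · intro w hw
        by_contra hc
        exact hbl y (by omega) w hw ⟨by omega, h2⟩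
    · right; omega
  · intro hx
    rw [mem_Aof]
    rcases hx with (⟨h1, h2⟩ | ⟨hxA, hxle⟩) | ⟨h1, h2⟩
    · refine ⟨⟨by omega, by omega⟩, fun y1 hy1 x1 hx1 hc => ?_⟩
      have := (h.sub y1 (by omega) hx1)
      rw [mem_Aof] at this
      have hb := this.1.1
      have := Bf_anti hδ (show y1 ≤ y by omega)
      omega
    · rw [mem_Aof] at hxA
      obtain ⟨⟨ha1, ha2⟩, hbl⟩ := hxA
      refine ⟨⟨by omega, by omega⟩, fun y1 hy1 x1 hx1 hc => ?_⟩
      rcases lt_or_ge y1 y with hy | hy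
      · exact hbl y1 hy x1 hx1 hc
      · have hy1y : y1 = y := by omega
        subst hy1y
        have := hxle x1 hx1
        omega
    · refine ⟨⟨by omega, by omega⟩, fun y1 hy1 x1 hx1 hc => ?_⟩
      have : Sf ν δ y1 ≤ Sf ν δ y := Sf_mono (by omega)
      omega

lemma mem_Aof_succ (hδ : IsIncrement ν δ) (h : RowsOK ν δ R y) {x : ℕ}
    (hx : x ∈ Aof ν δ R y) (hle : ∀ w ∈ R y, x ≤ w) : x ∈ Aof ν δ R (y+1) := by
  rw [decomp hδ h]
  exact Finset.mem_union_left _ (Finset.mem_union_right _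
    (Finset.mem_filter.2 ⟨hx, hle⟩))

lemma card_Aof_succ (hδ : IsIncrement ν δ) (h : RowsOK ν δ R y) :
    (Aof ν δ R (y+1)).card + (R y).card + Vf ν δ y =
      (Aof ν δ R y).card + 1 + Vf ν δ (y+1) := by
  classical
  have hBS := Bf_le_Sf hδ y
  have hBS1 := Bf_le_Sf hδ (y+1)
  have hBa : Bf ν δ (y+1) ≤ Bf ν δ y := Bf_anti hδ (by omega)
  have hSm : Sf ν δ y ≤ Sf ν δ (y+1) := Sf_mono (by omega)
  have hmid : (midset ν δ R y).card + ((R y).card - 1) = (Aof ν δ R y).card := by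
    rw [midset_eq h]
    rw [Finset.card_sdiff_of_subset]
    · have hsub : (R y).erase ((R y).min' (h.ne y le_rfl)) ⊆ Aof ν δ R y :=
        fun z hz => h.sub y le_rfl (Finset.mem_of_mem_erase hz)
      have := Finset.card_le_card hsub
      rw [Finset.card_erase_of_mem ((R y).min'_mem _)] at *
      have hc1 : 1 ≤ (R y).card := Finset.card_pos.2 (h.ne y le_rfl)
      omega
    · intro z hz
      exact h.sub y le_rfl (Finset.mem_of_mem_erase hz)
  have hdisj1 : Disjoint (Finset.Ico (Bf ν δ (y+1)) (Bf ν δ y)) (midset ν δ R y) := by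
    rw [Finset.disjoint_left]
    intro z hz1 hz2
    simp only [Finset.mem_Ico] at hz1
    have : z ∈ Aof ν δ R y := Finset.mem_of_mem_filter z hz2
    rw [mem_Aof] at this
    omega
  have hdisj2 : Disjoint
      (Finset.Ico (Bf ν δ (y+1)) (Bf ν δ y) ∪ midset ν δ R y)
      (Finset.Ioc (Sf ν δ y) (Sf ν δ (y+1))) := by
    rw [Finset.disjoint_left]
    intro z hz1 hz2
    simp only [Finset.mem_Ioc] at hz2
    rcases Finset.mem_union.1 hz1 with hz | hz
    · simp only [Finset.mem_Ico] at hz; omega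
    · have : z ∈ Aof ν δ R y := Finset.mem_of_mem_filter z hz
      rw [mem_Aof] at this
      omega
  have hcards : (Aof ν δ R (y+1)).card =
      (Bf ν δ y - Bf ν δ (y+1)) + (midset ν δ R y).card +
        (Sf ν δ (y+1) - Sf ν δ y) := by
    rw [decomp hδ h, Finset.card_union_of_disjoint hdisj2,
      Finset.card_union_of_disjoint hdisj1, Nat.card_Ico, Nat.card_Ioc]
  have hc1 : 1 ≤ (R y).card := Finset.card_pos.2 (h.ne y le_rfl)
  have hd : Bf ν δ y - Bf ν δ (y+1) + Bf ν δ (y+1) = Bf ν δ y := by omega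
  have he : Sf ν δ (y+1) - Sf ν δ y + Sf ν δ y = Sf ν δ (y+1) := by omega
  omega

lemma Aof_zero : Aof ν δ R 0 = Finset.Icc (Bf ν δ 0) (Sf ν δ 0) := by
  ext x
  rw [mem_Aof, Finset.mem_Icc]
  constructor
  · rintro ⟨h1, _⟩; exact h1
  · intro h1; exact ⟨h1, by omega⟩

/-- the master card formula -/
lemma card_Aof (hδ : IsIncrement ν δ) {z : ℕ} (h : ∀ y, y + 1 ≤ z → RowsOK ν δ R y) :
    (Aof ν δ R z).card + (∑ t ∈ Finset.range z, (R t).card) = Vf ν δ z + z + 1 := by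
  induction z with
  | zero =>
    rw [Aof_zero]
    have := Bf_le_Sf hδ 0
    simp only [Finset.range_zero, Finset.sum_empty, Nat.card_Icc]
    omega
  | succ z ih =>
    have hz := ih (fun y hy => h y (by omega))
    have hs := card_Aof_succ hδ (h z le_rfl)
    rw [Finset.sum_range_succ]
    omega

lemma erase_min_subset_gt (h : RowsOK ν δ R y) {x : ℕ} (hle : ∀ w ∈ R y, x ≤ w) :
    ∀ w ∈ (R y).erase ((R y).min' (h.ne y le_rfl)), x < w := by
  intro w hw
  have hwR := Finset.mem_of_mem_erase hw
  have hxw := hle w hwR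
  have h1 := (R y).min'_le w hwR
  have h2 := hle _ ((R y).min'_mem (h.ne y le_rfl))
  have h3 := (Finset.mem_erase.1 hw).1
  omega

lemma rnk_succ (hδ : IsIncrement ν δ) (h : RowsOK ν δ R y) {x : ℕ}
    (hx : x ∈ Aof ν δ R y) (hle : ∀ w ∈ R y, x ≤ w) :
    rnk (Aof ν δ R (y+1)) x + (R y).card =
      rnk (Aof ν δ R y) x + 1 + δ.getD y 0 := by
  classical
  set m := (R y).min' (h.ne y le_rfl) with hm
  have hBx : Bf ν δ y ≤ x ∧ x ≤ Sf ν δ y := (mem_Aof.1 hx).1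
  -- rank in row y
  have hAsplit : midset ν δ R y ∪ (R y).erase m = Aof ν δ R y := by
    rw [midset_eq h]
    exact Finset.sdiff_union_of_subset
      (fun z hz => h.sub y le_rfl (Finset.mem_of_mem_erase hz))
  have hdisj : Disjoint (midset ν δ R y) ((R y).erase m) := by
    rw [midset_eq h]
    exact Finset.sdiff_disjoint
  have hry : rnk (Aof ν δ R y) x =
      ((midset ν δ R y).filter (fun z => x < z)).card + ((R y).card - 1) := by
    unfold rnk
    rw [← hAsplit, Finset.filter_union,
      Finset.card_union_of_disjoint (Finset.disjoint_filter_filter hdisj)]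
    congr 1
    rw [Finset.filter_true_of_mem (fun w hw => erase_min_subset_gt h hle w hw),
      Finset.card_erase_of_mem ((R y).min'_mem _)]
  -- rank in row y+1
  have hry1 : rnk (Aof ν δ R (y+1)) x =
      ((midset ν δ R y).filter (fun z => x < z)).card + δ.getD y 0 := by
    unfold rnk
    rw [decomp hδ h, Finset.filter_union, Finset.filter_union]
    have e1 : (Finset.Ico (Bf ν δ (y+1)) (Bf ν δ y)).filter (fun z => x < z) = ∅ := by
      apply Finset.filter_false_of_mem
      intro z hz
      simp only [Finset.mem_Ico] at hz
      omega
    have e2 : (Finset.Ioc (Sf ν δ y) (Sf ν δ (y+1))).filter (fun z => x < z) =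
        Finset.Ioc (Sf ν δ y) (Sf ν δ (y+1)) := by
      apply Finset.filter_true_of_mem
      intro z hz
      simp only [Finset.mem_Ioc] at hz
      omega
    rw [e1, e2, Finset.empty_union]
    have hdisj2 : Disjoint ((midset ν δ R y).filter (fun z => x < z))
        (Finset.Ioc (Sf ν δ y) (Sf ν δ (y+1))) := by
      rw [Finset.disjoint_left]
      intro z hz1 hz2
      have : z ∈ Aof ν δ R y := Finset.mem_of_mem_filter z (Finset.mem_of_mem_filter z hz1)
      rw [mem_Aof] at this
      simp only [Finset.mem_Ioc] at hz2
      omega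
    rw [Finset.card_union_of_disjoint hdisj2, Nat.card_Ioc]
    have := Sf_succ (ν := ν) (δ := δ) y
    omega
  have hc1 : 1 ≤ (R y).card := Finset.card_pos.2 (h.ne y le_rfl)
  omega

/-! ### Trees from row systems -/

def Tset (ν : List ℕ) (R : ℕ → Finset ℕ) : Set (ℕ × ℕ) :=
  {p | p.2 < ν.length ∧ p.1 ∈ R p.2}

/-- rows of good systems are inside `Ldn` -/
lemma Tset_subset_Ldn (hδ : IsIncrement ν δ)
    (hsub : ∀ y < ν.length, R y ⊆ Aof ν δ R y) :
    Tset ν R ⊆ Ldn ν δ := by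
  rintro ⟨x, y⟩ ⟨hy, hx⟩
  rw [mem_Ldn hδ]
  have := (mem_Aof.1 (hsub y hy hx)).1
  exact ⟨hy, this.1, this.2⟩

lemma Tset_compat (hδ : IsIncrement ν δ)
    (hsub : ∀ y < ν.length, R y ⊆ Aof ν δ R y) :
    PairwiseCompat (nuCheck ν δ) (Tset ν R) := by
  have key : ∀ p ∈ Tset ν R, ∀ q ∈ Tset ν R,
      p.1 < q.1 ∧ p.2 < q.2 → ¬ Incomp (nuCheck ν δ) p q := by
    rintro ⟨x1, y1⟩ ⟨hy1, hx1⟩ ⟨x2, y2⟩ ⟨hy2, hx2⟩ ⟨h1, h2⟩ hinc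
    rw [incomp_iff hδ] at hinc
    simp only at hinc h1 h2
    have hcor : x2 ≤ Sf ν δ y1 := by
      have := hinc.2.2
      rw [min_eq_left (le_of_lt h2), max_eq_right (le_of_lt h1)] at this
      exact this
    have := (mem_Aof.1 (hsub y2 hy2 hx2)).2 y1 h2 x1 hx1
    exact this ⟨h1, hcor⟩
  intro p hp q hq hinc
  have hd := hinc.1
  rcases hd with h | h
  · exact key p hp q hq h hinc
  · exact key q hq p hp h (incomp_comm hinc)

lemma rowN_Tset (R : ℕ → Finset ℕ) {y : ℕ} (hy : y < ν.length) :
    rowN (Tset ν R) y = (R y).card := by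
  unfold rowN
  have : {p ∈ Tset ν R | p.2 = y} = (fun x => (x, y)) '' (R y : Set ℕ) := by
    ext ⟨a, b⟩
    simp only [Set.mem_setOf_eq, Set.mem_image, Finset.mem_coe, Tset]
    constructor
    · rintro ⟨⟨_, h2⟩, h3⟩
      exact ⟨a, by simpa [h3] using h2, by simp [h3]⟩
    · rintro ⟨x, hx, h⟩
      rw [Prod.mk.injEq] at h
      obtain ⟨rfl, rfl⟩ := h
      exact ⟨⟨hy, hx⟩, rfl⟩
  rw [this, Set.ncard_image_of_injective _ (fun a b hab => by simpa using hab),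
    Set.ncard_coe_finset]

/-! ### Good row systems and trees -/

structure GoodF (ν δ : List ℕ) (R : ℕ → Finset ℕ) : Prop where
  ok : RowsOK ν δ R (ν.length - 1)
  empt : ∀ y, ν.length ≤ y → R y = ∅
  full : Aof ν δ R (ν.length - 1) ⊆ R (ν.length - 1)

lemma GoodF.sub' (hg : GoodF ν δ R) {y : ℕ} (hy : y < ν.length) : R y ⊆ Aof ν δ R y :=
  hg.ok.sub y (by omega)

lemma GoodF.ne' (hg : GoodF ν δ R) {y : ℕ} (hy : y < ν.length) : (R y).Nonempty :=
  hg.ok.ne y (by omega)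

lemma GoodF.up' (hg : GoodF ν δ R) {y : ℕ} (hy : y < ν.length) :
    ∀ u ∈ R y, ∀ x ∈ Aof ν δ R y, u ≤ x → x ∈ R y :=
  hg.ok.up y (by omega)

lemma GoodF.rowsOK (hg : GoodF ν δ R) {y : ℕ} (hy : y < ν.length) : RowsOK ν δ R y :=
  hg.ok.mono (by omega)

lemma row_eq_topk (h : RowsOK ν δ R y) :
    R y = topk (Aof ν δ R y) (R y).card :=
  upset_eq_topk (h.sub y le_rfl) (h.up y le_rfl)
    (by rw [min_eq_left (Finset.card_le_card (h.sub y le_rfl))])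

/-- two good row systems with the same cardinalities agree -/
lemma rows_unique {R R' : ℕ → Finset ℕ}
    (h : ∀ y < ν.length, RowsOK ν δ R y) (h' : ∀ y < ν.length, RowsOK ν δ R' y)
    (he : ∀ y, ν.length ≤ y → R y = ∅) (he' : ∀ y, ν.length ≤ y → R' y = ∅)
    (hc : ∀ y, y < ν.length → (R y).card = (R' y).card) : ∀ y, R y = R' y := by
  intro y
  induction y using Nat.strong_induction_on with
  | _ y ih =>
    rcases lt_or_ge y ν.length with hy | hy
    · have hA : Aof ν δ R y = Aof ν δ R' y := Aof_congr (fun y1 h1 => ih y1 h1)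
      rw [row_eq_topk (h y hy), row_eq_topk (h' y hy), hA, hc y hy]
    · rw [he y hy, he' y hy]

/-- the key witness lemma for maximality -/
lemma witness_aux (hδ : IsIncrement ν δ) (hg : GoodF ν δ R) :
    ∀ t y', y' < ν.length → ν.length - y' ≤ t →
      ∀ y0 < y', ∀ x z, x ∈ Aof ν δ R y' → z ∈ Aof ν δ R y' → x < z → z ≤ Sf ν δ y0 →
        ∃ y2, y' ≤ y2 ∧ y2 < ν.length ∧ ∃ x2 ∈ R y2, x < x2 ∧ x2 ≤ Sf ν δ y0 := by
  intro t
  induction t with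
  | zero => intro y' h1 h2; omega
  | succ t ih =>
    intro y' h1 h2 y0 hy0 x z hx hz hxz hzS
    by_cases htop : y' = ν.length - 1
    · -- top row is full
      refine ⟨y', le_rfl, h1, z, ?_, hxz, hzS⟩
      rw [htop] at hz ⊢
      exact hg.full hz
    · by_cases hw : ∃ x2 ∈ R y', x < x2 ∧ x2 ≤ Sf ν δ y0
      · obtain ⟨x2, hx2, hh⟩ := hw
        exact ⟨y', le_rfl, h1, x2, hx2, hh⟩
      · push_neg at hw
        have hok : RowsOK ν δ R y' := hg.rowsOK h1
        -- z is below every element of R y'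
        have hzlt : ∀ w ∈ R y', z < w := by
          intro w hwR
          by_contra hc
          push_neg at hc
          have : z ∈ R y' := hok.up y' le_rfl w hwR z hz hc
          exact absurd (hw z this hxz) (by omega)
        have hxle : ∀ w ∈ R y', x ≤ w := fun w hwR => le_of_lt (by
          have := hzlt w hwR; omega)
        have hzle : ∀ w ∈ R y', z ≤ w := fun w hwR => le_of_lt (hzlt w hwR)
        have hx1 : x ∈ Aof ν δ R (y'+1) := mem_Aof_succ hδ hok hx hxle
        have hz1 : z ∈ Aof ν δ R (y'+1) := mem_Aof_succ hδ hok hz hzle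
        obtain ⟨y2, hy2a, hy2b, w⟩ :=
          ih (y'+1) (by omega) (by omega) y0 (by omega) x z hx1 hz1 hxz hzS
        exact ⟨y2, by omega, hy2b, w⟩

lemma witness (hδ : IsIncrement ν δ) (hg : GoodF ν δ R) {y' y0 x z : ℕ}
    (h1 : y' < ν.length) (hy0 : y0 < y') (hx : x ∈ Aof ν δ R y')
    (hz : z ∈ Aof ν δ R y') (hxz : x < z) (hzS : z ≤ Sf ν δ y0) :
    ∃ y2, y' ≤ y2 ∧ y2 < ν.length ∧ ∃ x2 ∈ R y2, x < x2 ∧ x2 ≤ Sf ν δ y0 :=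
  witness_aux hδ hg ν.length y' h1 (by omega) y0 hy0 x z hx hz hxz hzS

/-- any point of `Ldn` outside the tree is incompatible with some tree point -/
lemma blocking (hδ : IsIncrement ν δ) (hg : GoodF ν δ R) {x y : ℕ}
    (hy : y < ν.length) (hB : Bf ν δ y ≤ x) (hS : x ≤ Sf ν δ y) (hxR : x ∉ R y) :
    ∃ s ∈ Tset ν R, Incomp (nuCheck ν δ) s (x, y) ∨ Incomp (nuCheck ν δ) (x, y) s := by
  by_cases hxA : x ∈ Aof ν δ R y
  · -- x is available but not chosen: witness above
    have htop : y ≠ ν.length - 1 := by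
      intro hc
      rw [hc] at hxA hxR
      exact hxR (hg.full hxA)
    have hok : RowsOK ν δ R y := hg.rowsOK hy
    have hxlt : ∀ w ∈ R y, x < w := by
      intro w hwR
      by_contra hc
      push_neg at hc
      exact hxR (hok.up y le_rfl w hwR x hxA hc)
    set m := (R y).min' (hok.ne y le_rfl) with hm
    have hmR : m ∈ R y := (R y).min'_mem _
    have hmA : m ∈ Aof ν δ R y := hok.sub y le_rfl hmR
    have hmS : m ≤ Sf ν δ y := (mem_Aof.1 hmA).1.2
    have hx1 : x ∈ Aof ν δ R (y+1) :=
      mem_Aof_succ hδ hok hxA (fun w hw => le_of_lt (hxlt w hw))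
    have hm1 : m ∈ Aof ν δ R (y+1) :=
      mem_Aof_succ hδ hok hmA (fun w hw => (R y).min'_le w hw)
    obtain ⟨y2, hy2a, hy2b, x2, hx2R, hx2a, hx2b⟩ :=
      witness hδ hg (by omega) (by omega) hx1 hm1 (hxlt m hmR) hmS
    refine ⟨(x2, y2), ⟨hy2b, hx2R⟩, Or.inr ?_⟩
    exact incomp_mk hδ hx2a (by omega) hx2b hy
  · -- x is blocked by a lower row
    rw [mem_Aof] at hxA
    push_neg at hxA
    obtain ⟨y1, hy1, x1, hx1R, hlt, hle2⟩ := hxA ⟨hB, hS⟩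
    refine ⟨(x1, y1), ⟨by omega, hx1R⟩, Or.inl ?_⟩
    exact incomp_mk hδ hlt hy1 hle2 (by omega)

/-- the tree of a good row system is a (δ,ν)-tree -/
lemma isDNTree_Tset (hδ : IsIncrement ν δ) (hg : GoodF ν δ R) :
    IsDNTree ν δ (Tset ν R) := by
  have hsub : ∀ y < ν.length, R y ⊆ Aof ν δ R y := fun y hy => hg.sub' hy
  refine ⟨Tset_subset_Ldn hδ hsub, Tset_compat hδ hsub, ?_⟩
  intro T' hTT' hT'L hT'c
  apply Set.Subset.antisymm _ hTT'
  rintro ⟨x, y⟩ hp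
  by_contra hpT
  have hpL := hT'L hp
  rw [mem_Ldn hδ] at hpL
  have hxR : x ∉ R y := fun hc => hpT ⟨hpL.1, hc⟩
  obtain ⟨s, hsT, hinc⟩ := blocking hδ hg hpL.1 hpL.2.1 hpL.2.2 hxR
  rcases hinc with h | h
  · exact hT'c s (hTT' hsT) (x, y) hp h
  · exact hT'c (x, y) hp s (hTT' hsT) h

/-! ### From trees to row systems -/

lemma incomp_cases (hδ : IsIncrement ν δ) {p q : ℕ × ℕ} (h : Incomp (nuCheck ν δ) p q) :
    (p.1 < q.1 ∧ p.2 < q.2 ∧ q.1 ≤ Sf ν δ p.2 ∧ p.2 < ν.length) ∨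
    (q.1 < p.1 ∧ q.2 < p.2 ∧ p.1 ≤ Sf ν δ q.2 ∧ q.2 < ν.length) := by
  rw [incomp_iff hδ] at h
  obtain ⟨hd, hlen, hcor⟩ := h
  rcases hd with ⟨h1, h2⟩ | ⟨h1, h2⟩
  · left
    rw [min_eq_left (le_of_lt h2)] at hlen hcor
    rw [max_eq_right (le_of_lt h1)] at hcor
    exact ⟨h1, h2, hcor, hlen⟩
  · right
    rw [min_eq_right (le_of_lt h2)] at hlen hcor
    rw [max_eq_left (le_of_lt h1)] at hcor
    exact ⟨h1, h2, hcor, hlen⟩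

lemma incomp_irrefl (ω : List ℕ) (p : ℕ × ℕ) : ¬ Incomp ω p p := by
  unfold Incomp
  omega

open Classical in
noncomputable def rowsOf (ν : List ℕ) (T : Set (ℕ × ℕ)) (y : ℕ) : Finset ℕ :=
  (Finset.range (ν.sum + 1)).filter (fun x => (x, y) ∈ T)

lemma mem_rowsOf (hδ : IsIncrement ν δ) {T : Set (ℕ × ℕ)} (hT : T ⊆ Ldn ν δ)
    {x y : ℕ} : x ∈ rowsOf ν T y ↔ (x, y) ∈ T := by
  unfold rowsOf
  simp only [Finset.mem_filter, Finset.mem_range]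
  constructor
  · exact fun h => h.2
  · intro h
    refine ⟨?_, h⟩
    have := (mem_Ldn hδ).1 (hT h)
    have := Sf_le_total hδ y
    omega

lemma Tset_rowsOf (hδ : IsIncrement ν δ) {T : Set (ℕ × ℕ)} (hT : T ⊆ Ldn ν δ) :
    Tset ν (rowsOf ν T) = T := by
  ext ⟨x, y⟩
  unfold Tset
  simp only [Set.mem_setOf_eq]
  rw [mem_rowsOf hδ hT]
  constructor
  · exact fun h => h.2
  · intro h
    exact ⟨((mem_Ldn hδ).1 (hT h)).1, h⟩

/-- membership by non-creation of incompatibilities, via maximality -/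
lemma insert_mem (hδ : IsIncrement ν δ) {T : Set (ℕ × ℕ)} (hT : IsDNTree ν δ T)
    {p : ℕ × ℕ} (hpL : p ∈ Ldn ν δ)
    (hcomp : ∀ s ∈ T, ¬ Incomp (nuCheck ν δ) p s) : p ∈ T := by
  obtain ⟨hTL, hTc, hmax⟩ := hT
  have h1 : T ⊆ insert p T := Set.subset_insert p T
  have h2 : insert p T ⊆ Ldn ν δ := Set.insert_subset hpL hTL
  have h3 : PairwiseCompat (nuCheck ν δ) (insert p T) := by
    intro a ha b hb
    rcases Set.mem_insert_iff.1 ha with ha' | ha' <;>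
      rcases Set.mem_insert_iff.1 hb with hb' | hb'
    · rw [ha', hb']; exact incomp_irrefl _ p
    · rw [ha']; exact hcomp b hb'
    · rw [hb']; exact fun h => hcomp a ha' (incomp_comm h)
    · exact hTc a ha' b hb' 
  have := hmax (insert p T) h1 h2 h3
  rw [← this]
  exact Set.mem_insert p T

lemma goodF_of_tree (hδ : IsIncrement ν δ) (hν : 0 < ν.length) {T : Set (ℕ × ℕ)}
    (hT : IsDNTree ν δ T) : GoodF ν δ (rowsOf ν T) := by
  classical
  obtain ⟨hTL, hTc, hmax⟩ := hT
  set R := rowsOf ν T with hR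
  have hmem : ∀ {x y : ℕ}, x ∈ R y ↔ (x, y) ∈ T := fun {x y} => mem_rowsOf hδ hTL
  -- row containment
  have hsub : ∀ y, y < ν.length → R y ⊆ Aof ν δ R y := by
    intro y hy x hx
    have hxT : (x, y) ∈ T := hmem.1 hx
    have hxL := (mem_Ldn hδ).1 (hTL hxT)
    rw [mem_Aof]
    refine ⟨⟨hxL.2.1, hxL.2.2⟩, ?_⟩
    rintro y1 hy1 x1 hx1 ⟨ha, hb⟩
    have hx1T : (x1, y1) ∈ T := hmem.1 hx1
    exact hTc (x1, y1) hx1T (x, y) hxT (incomp_mk hδ ha hy1 hb (by omega))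
  -- upward closure
  have hup : ∀ y, y < ν.length → ∀ u ∈ R y, ∀ x ∈ Aof ν δ R y, u ≤ x → x ∈ R y := by
    intro y hy u hu x hxA hux
    rcases eq_or_lt_of_le hux with rfl | hlt
    · exact hu
    have huT : (u, y) ∈ T := hmem.1 hu
    rw [mem_Aof] at hxA
    obtain ⟨⟨hB, hS⟩, hbl⟩ := hxA
    apply hmem.2
    apply insert_mem hδ ⟨hTL, hTc, hmax⟩ ((mem_Ldn hδ).2 ⟨hy, hB, hS⟩)
    rintro ⟨a, b⟩ hsT hinc
    rcases incomp_cases hδ hinc with ⟨h1, h2, h3, h4⟩ | ⟨h1, h2, h3, h4⟩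
    · -- s strictly NE of (x,y)
      simp only at h1 h2 h3 h4
      exact hTc (u, y) huT (a, b) hsT (incomp_mk hδ (by omega) h2 h3 h4)
    · -- s strictly SW of (x,y) : contradicts x ∈ Aof
      simp only at h1 h2 h3 h4
      exact hbl b h2 a (hmem.2 hsT) ⟨h1, h3⟩
  -- nonempty rows
  have hne : ∀ y, y < ν.length → (R y).Nonempty := by
    intro y hy
    by_contra hem
    rw [Finset.not_nonempty_iff_eq_empty] at hem
    have hempty : ∀ x, (x, y) ∉ T := by
      intro x hx
      have : x ∈ R y := hmem.2 hx
      rw [hem] at this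
      simp at this
    set Cand := ((Finset.range (ν.sum + 1)) ×ˢ (Finset.range ν.length)).filter
      (fun s => s ∈ T ∧ y < s.2 ∧ Bf ν δ y < s.1 ∧ s.1 ≤ Sf ν δ y) with hCand
    have hmemC : ∀ s : ℕ × ℕ, s ∈ Cand ↔
        s ∈ T ∧ y < s.2 ∧ Bf ν δ y < s.1 ∧ s.1 ≤ Sf ν δ y := by
      intro s
      rw [hCand]
      simp only [Finset.mem_filter, Finset.mem_product, Finset.mem_range]
      constructor
      · exact fun h => h.2
      · intro h
        have hL := (mem_Ldn hδ).1 (hTL (show (s.1, s.2) ∈ T from h.1))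
        have := Sf_le_total hδ s.2
        exact ⟨⟨by omega, hL.1⟩, h⟩
    have hBS := Bf_le_Sf hδ y
    by_cases hCe : Cand.Nonempty
    · -- pick minimal row, then maximal column
      set y2 := (Cand.image Prod.snd).min' (hCe.image _) with hy2
      have hy2mem : y2 ∈ Cand.image Prod.snd := (Cand.image Prod.snd).min'_mem _
      have hy2min : ∀ s ∈ Cand, y2 ≤ s.2 := fun s hs =>
        (Cand.image Prod.snd).min'_le s.2 (Finset.mem_image_of_mem _ hs)
      set C2 := Cand.filter (fun s => s.2 = y2) with hC2
      have hC2ne : C2.Nonempty := by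
        obtain ⟨s, hs, hs2⟩ := Finset.mem_image.1 hy2mem
        exact ⟨s, Finset.mem_filter.2 ⟨hs, hs2⟩⟩
      set x2 := (C2.image Prod.fst).max' (hC2ne.image _) with hx2
      have hx2mem : x2 ∈ C2.image Prod.fst := (C2.image Prod.fst).max'_mem _
      have hx2max : ∀ s ∈ C2, s.1 ≤ x2 := fun s hs =>
        (C2.image Prod.fst).le_max' s.1 (Finset.mem_image_of_mem _ hs)
      obtain ⟨s0, hs0C2, hs01⟩ := Finset.mem_image.1 hx2mem
      have hs0C := Finset.mem_filter.1 hs0C2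
      have hs0 := (hmemC s0).1 hs0C.1
      have hs02 : s0.2 = y2 := hs0C.2
      have hs0T : (x2, y2) ∈ T := by
        rw [← hs01, ← hs02]
        exact hs0.1
      have hy2T : y < y2 := by rw [← hs02]; exact hs0.2.1
      have hx2B : Bf ν δ y < x2 := by rw [← hs01]; exact hs0.2.2.1
      have hx2S : x2 ≤ Sf ν δ y := by rw [← hs01]; exact hs0.2.2.2
      have hy2L : y2 < ν.length := ((mem_Ldn hδ).1 (hTL hs0T)).1
      have hy2Sf : Sf ν δ y ≤ Sf ν δ y2 := Sf_mono (le_of_lt hy2T)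
      -- add the point (x2, y)
      have : (x2, y) ∈ T := by
        apply insert_mem hδ ⟨hTL, hTc, hmax⟩
          ((mem_Ldn hδ).2 ⟨hy, by omega, hx2S⟩)
        rintro ⟨a, b⟩ hsT hinc
        rcases incomp_cases hδ hinc with ⟨h1, h2, h3, h4⟩ | ⟨h1, h2, h3, h4⟩
        · -- (a,b) strictly NE of (x2,y)
          simp only at h1 h2 h3 h4
          have habC : (a, b) ∈ Cand := (hmemC (a, b)).2 ⟨hsT, h2, by omega, h3⟩
          have hb2 : y2 ≤ b := hy2min _ habC
          rcases eq_or_lt_of_le hb2 with heq | hlt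
          · have : a ≤ x2 := hx2max (a, b) (Finset.mem_filter.2 ⟨habC, heq.symm⟩)
            omega
          · -- b > y2 : (x2,y2) and (a,b) incompatible
            exact hTc (x2, y2) hs0T (a, b) hsT
              (incomp_mk hδ h1 hlt (by omega) hy2L)
        · -- (a,b) strictly SW of (x2,y)
          simp only at h1 h2 h3 h4
          exact hTc (a, b) hsT (x2, y2) hs0T
            (incomp_mk hδ h1 (by omega) (by omega) h4)
      exact hempty x2 this
    · -- no candidates : add (Bf y, y)
      rw [Finset.not_nonempty_iff_eq_empty] at hCe
      have : (Bf ν δ y, y) ∈ T := by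
        apply insert_mem hδ ⟨hTL, hTc, hmax⟩
          ((mem_Ldn hδ).2 ⟨hy, le_rfl, by omega⟩)
        rintro ⟨a, b⟩ hsT hinc
        rcases incomp_cases hδ hinc with ⟨h1, h2, h3, h4⟩ | ⟨h1, h2, h3, h4⟩
        · simp only at h1 h2 h3 h4
          have : (a, b) ∈ Cand := (hmemC (a, b)).2 ⟨hsT, h2, h1, h3⟩
          rw [hCe] at this
          simp at this
        · simp only at h1 h2 h3 h4
          have hL := (mem_Ldn hδ).1 (hTL hsT)
          have := Bf_anti hδ (show b ≤ y by omega)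
          omega
      exact hempty _ this
  -- fullness of the top row
  have hfull : Aof ν δ R (ν.length - 1) ⊆ R (ν.length - 1) := by
    intro x hxA
    rw [mem_Aof] at hxA
    obtain ⟨⟨hB, hS⟩, hbl⟩ := hxA
    apply hmem.2
    apply insert_mem hδ ⟨hTL, hTc, hmax⟩ ((mem_Ldn hδ).2 ⟨by omega, hB, hS⟩)
    rintro ⟨a, b⟩ hsT hinc
    rcases incomp_cases hδ hinc with ⟨h1, h2, h3, h4⟩ | ⟨h1, h2, h3, h4⟩
    · simp only at h1 h2 h3 h4
      have hL := (mem_Ldn hδ).1 (hTL hsT)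
      omega
    · simp only at h1 h2 h3 h4
      exact hbl b h2 a (hmem.2 hsT) ⟨h1, h3⟩
  refine ⟨⟨fun y1 h1 => hsub y1 (by omega), fun y1 h1 => hne y1 (by omega),
    fun y1 h1 => hup y1 (by omega)⟩, ?_, hfull⟩
  intro y hy
  rw [Finset.eq_empty_iff_forall_notMem]
  intro x hx
  have := (mem_Ldn hδ).1 (hTL (hmem.1 hx))
  omega

/-! ### The right flushing -/

noncomputable def frow (ν δ μ : List ℕ) : ℕ → Finset ℕ
  | y =>
    if y < ν.length then
      topk (Aof ν δ (fun y1 => if h : y1 < y then frow ν δ μ y1 else ∅) y)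
        (μ.getD y 0 + 1)
    else ∅
  decreasing_by exact h

lemma sum_succ_distrib (f : ℕ → ℕ) (y : ℕ) :
    ∑ t ∈ Finset.range y, (f t + 1) = (∑ t ∈ Finset.range y, f t) + y := by
  rw [Finset.sum_add_distrib, Finset.sum_const, Finset.card_range, smul_eq_mul, mul_one]

lemma frow_eq (ν δ μ : List ℕ) {y : ℕ} (hy : y < ν.length) :
    frow ν δ μ y = topk (Aof ν δ (frow ν δ μ) y) (μ.getD y 0 + 1) := by
  rw [frow, if_pos hy]
  congr 1
  apply Aof_congr
  intro y1 h1
  rw [dif_pos h1]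

lemma frow_empty (ν δ μ : List ℕ) {y : ℕ} (hy : ν.length ≤ y) :
    frow ν δ μ y = ∅ := by
  rw [frow, if_neg (by omega)]

variable {μ : List ℕ}

lemma nupath_take_le (hμ : IsNuPath ν μ) (y : ℕ) :
    ∑ t ∈ Finset.range (y+1), μ.getD t 0 ≤ Vf ν δ y := by
  have := hμ.2.1 (y+1)
  rw [take_sum_eq, take_sum_eq] at this
  exact this

lemma frow_P (hδ : IsIncrement ν δ) (hμ : IsNuPath ν μ) :
    ∀ y, y < ν.length →
      RowsOK ν δ (frow ν δ μ) y ∧ (frow ν δ μ y).card = μ.getD y 0 + 1 := by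
  intro y
  induction y using Nat.strong_induction_on with
  | _ y ih =>
    intro hy
    have hok : ∀ y1, y1 + 1 ≤ y → RowsOK ν δ (frow ν δ μ) y1 :=
      fun y1 h1 => (ih y1 (by omega) (by omega)).1
    have hcA := card_Aof hδ (R := frow ν δ μ) hok
    have hsum : ∑ t ∈ Finset.range y, (frow ν δ μ t).card =
        (∑ t ∈ Finset.range y, μ.getD t 0) + y := by
      rw [← sum_succ_distrib]
      apply Finset.sum_congr rfl
      intro t ht
      simp only [Finset.mem_range] at ht
      exact (ih t ht (by omega)).2
    have hfe : μ.getD y 0 + 1 ≤ (Aof ν δ (frow ν δ μ) y).card := by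
      have h1 := nupath_take_le (δ := δ) hμ y
      rw [Finset.sum_range_succ] at h1
      omega
    have hA := frow_eq ν δ μ hy
    have hcard : (frow ν δ μ y).card = μ.getD y 0 + 1 := by
      rw [hA, card_topk]
      omega
    have hsub1 : frow ν δ μ y ⊆ Aof ν δ (frow ν δ μ) y := by
      rw [hA]; exact topk_subset _ _
    have hup1 : ∀ u ∈ frow ν δ μ y, ∀ x ∈ Aof ν δ (frow ν δ μ) y, u ≤ x →
        x ∈ frow ν δ μ y := by
      rw [hA]; exact fun u hu x hx hux => topk_upset hu hx hux
    have hne1 : (frow ν δ μ y).Nonempty := by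
      rw [← Finset.card_pos, hcard]; omega
    refine ⟨⟨?_, ?_, ?_⟩, hcard⟩
    · intro y1 h1
      rcases eq_or_lt_of_le h1 with rfl | h2
      · exact hsub1
      · exact (hok y1 (by omega)).sub y1 le_rfl
    · intro y1 h1
      rcases eq_or_lt_of_le h1 with rfl | h2
      · exact hne1
      · exact (hok y1 (by omega)).ne y1 le_rfl
    · intro y1 h1
      rcases eq_or_lt_of_le h1 with rfl | h2
      · exact hup1
      · exact (hok y1 (by omega)).up y1 le_rfl

lemma goodF_frow (hδ : IsIncrement ν δ) (hν : 0 < ν.length) (hμ : IsNuPath ν μ) :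
    GoodF ν δ (frow ν δ μ) := by
  have hP := frow_P hδ hμ
  have htop : ν.length - 1 < ν.length := by omega
  refine ⟨⟨?_, ?_, ?_⟩, fun y hy => frow_empty ν δ μ hy, ?_⟩
  · exact fun y1 h1 => (hP y1 (by omega)).1.sub y1 le_rfl
  · exact fun y1 h1 => (hP y1 (by omega)).1.ne y1 le_rfl
  · exact fun y1 h1 => (hP y1 (by omega)).1.up y1 le_rfl
  · -- fullness
    set Y := ν.length - 1 with hY
    have hok : ∀ y1, y1 + 1 ≤ Y → RowsOK ν δ (frow ν δ μ) y1 :=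
      fun y1 h1 => (hP y1 (by omega)).1
    have hcA := card_Aof hδ (R := frow ν δ μ) hok
    have hsum : ∑ t ∈ Finset.range Y, (frow ν δ μ t).card =
        (∑ t ∈ Finset.range Y, μ.getD t 0) + Y := by
      rw [← sum_succ_distrib]
      apply Finset.sum_congr rfl
      intro t ht
      simp only [Finset.mem_range] at ht
      exact (hP t (by omega)).2
    have hlen : μ.length = ν.length := hμ.1
    have htot : ∑ t ∈ Finset.range (Y+1), μ.getD t 0 = ν.sum := by
      rw [← take_sum_eq, take_sum_all _ _ (by omega), hμ.2.2]
    have hVtot : Vf ν δ Y = ν.sum := by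
      unfold Vf
      rw [← take_sum_eq, take_sum_all _ _ (by omega)]
    have hAc : (Aof ν δ (frow ν δ μ) Y).card ≤ μ.getD Y 0 + 1 := by
      rw [Finset.sum_range_succ] at htot
      omega
    intro x hx
    rw [frow_eq ν δ μ htop, topk_eq_self hAc]
    exact hx

/-- Part 1, existence: the flushed tree -/
lemma frow_tree (hδ : IsIncrement ν δ) (hν : 0 < ν.length) (hμ : IsNuPath ν μ) :
    IsDNTree ν δ (Tset ν (frow ν δ μ)) ∧
      ∀ i, i < ν.length → rowN (Tset ν (frow ν δ μ)) i = μ.getD i 0 + 1 := by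
  refine ⟨isDNTree_Tset hδ (goodF_frow hδ hν hμ), fun i hi => ?_⟩
  rw [rowN_Tset _ hi, (frow_P hδ hμ i hi).2]

/-- trees with equal row counts are equal -/
lemma tree_unique (hδ : IsIncrement ν δ) (hν : 0 < ν.length) {T T' : Set (ℕ × ℕ)}
    (hT : IsDNTree ν δ T) (hT' : IsDNTree ν δ T')
    (hc : ∀ y, y < ν.length → rowN T y = rowN T' y) : T = T' := by
  have hg := goodF_of_tree hδ hν hT
  have hg' := goodF_of_tree hδ hν hT'
  have hre := rows_unique (fun y hy => hg.rowsOK hy) (fun y hy => hg'.rowsOK hy)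
    hg.empt hg'.empt ?_
  · rw [← Tset_rowsOf hδ hT.1, ← Tset_rowsOf hδ hT'.1]
    unfold Tset
    ext p
    simp only [Set.mem_setOf_eq, hre p.2]
  · intro y hy
    rw [← rowN_Tset (ν := ν) (rowsOf ν T) hy, ← rowN_Tset (ν := ν) (rowsOf ν T') hy,
      Tset_rowsOf hδ hT.1, Tset_rowsOf hδ hT'.1]
    exact hc y hy

/-- row counts of a tree -/
lemma rowN_tree (hδ : IsIncrement ν δ) {T : Set (ℕ × ℕ)} (hT : T ⊆ Ldn ν δ)
    {y : ℕ} (hy : y < ν.length) : rowN T y = (rowsOf ν T y).card := by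
  conv_lhs => rw [← Tset_rowsOf hδ hT]
  exact rowN_Tset _ hy

/-- Part 2: the path of a tree -/
lemma tree_path (hδ : IsIncrement ν δ) (hν : 0 < ν.length) {T : Set (ℕ × ℕ)}
    (hT : IsDNTree ν δ T) :
    ∃ μT : List ℕ, IsNuPath ν μT ∧
      ∀ i, i < ν.length → rowN T i = μT.getD i 0 + 1 := by
  classical
  have hg := goodF_of_tree hδ hν hT
  set R := rowsOf ν T with hRdef
  set μT := (List.range ν.length).map (fun y => (R y).card - 1) with hμT
  have hgd : ∀ i, i < ν.length → μT.getD i 0 = (R i).card - 1 := by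
    intro i hi
    rw [hμT, List.getD_eq_getElem _ _ (by simpa using hi)]
    simp
  have hc1 : ∀ t, t < ν.length → 1 ≤ (R t).card :=
    fun t ht => Finset.card_pos.2 (hg.ne' ht)
  have hμlen : μT.length = ν.length := by simp [hμT]
  have hkey : ∀ j, j ≤ ν.length →
      (∑ t ∈ Finset.range j, μT.getD t 0) + j = ∑ t ∈ Finset.range j, (R t).card := by
    intro j hj
    rw [← sum_succ_distrib]
    apply Finset.sum_congr rfl
    intro t ht
    simp only [Finset.mem_range] at ht
    rw [hgd t (by omega)]
    have := hc1 t (by omega)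
    omega
  have hcA : ∀ j, j ≤ ν.length →
      (Aof ν δ R j).card + ∑ t ∈ Finset.range j, (R t).card = Vf ν δ j + j + 1 :=
    fun j hj => card_Aof hδ (fun y1 h1 => hg.rowsOK (by omega))
  have hsubA : ∀ y, y < ν.length → (R y).card ≤ (Aof ν δ R y).card :=
    fun y hy => Finset.card_le_card (hg.sub' hy)
  have hVf : ∀ j, Vf ν δ j = ∑ t ∈ Finset.range (j+1), ν.getD t 0 := fun j => rfl
  have hfullc : (R (ν.length - 1)).card = (Aof ν δ R (ν.length - 1)).card :=
    le_antisymm (hsubA _ (by omega))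
      (Finset.card_le_card hg.full)
  have htotR : ∑ t ∈ Finset.range ν.length, (R t).card = Vf ν δ (ν.length - 1) + ν.length := by
    have h1 := hcA (ν.length - 1) (by omega)
    have h2 : ν.length = (ν.length - 1) + 1 := by omega
    rw [h2, Finset.sum_range_succ, Nat.add_sub_cancel]
    omega
  have hVtot : Vf ν δ (ν.length - 1) = ν.sum := by
    rw [hVf, ← take_sum_eq, take_sum_all _ _ (by omega)]
  have hμtot : μT.sum = ν.sum := by
    rw [← take_sum_all μT ν.length (by omega), take_sum_eq]
    have := hkey ν.length le_rfl
    omega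
  refine ⟨μT, ⟨hμlen, ?_, hμtot⟩, ?_⟩
  · intro j
    rcases Nat.lt_or_ge j (ν.length + 1) with hj | hj
    · rcases Nat.eq_zero_or_pos j with rfl | hj0
      · simp
      · have hy : j - 1 < ν.length := by omega
        have hj1 : j = (j - 1) + 1 := by omega
        rw [take_sum_eq, take_sum_eq]
        have h1 := hkey j (by omega)
        have h2 := hcA (j-1) (by omega)
        have h3 := hsubA (j-1) hy
        rw [hj1, Finset.sum_range_succ] at h1 ⊢
        rw [hVf] at h2
        have h4 : ∑ t ∈ Finset.range (j-1), (R t).card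
            = ∑ t ∈ Finset.range (j-1+1), (R t).card - (R (j-1)).card := by
          rw [Finset.sum_range_succ]; omega
        have h5 := hkey (j-1) (by omega)
        omega
    · rw [take_sum_all μT _ (by omega), take_sum_all ν _ (by omega), hμtot]
  · intro i hi
    rw [rowN_tree hδ hT.1 hi, ← hRdef, hgd i hi]
    have := hc1 i hi
    omega

lemma nupath_ext {μ1 μ2 : List ℕ} (h1 : IsNuPath ν μ1) (h2 : IsNuPath ν μ2)
    (h : ∀ i, i < ν.length → μ1.getD i 0 = μ2.getD i 0) : μ1 = μ2 := by
  apply List.ext_getElem (by rw [h1.1, h2.1])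
  intro i hi1 hi2
  have := h i (by rw [← h1.1]; exact hi1)
  rwa [List.getD_eq_getElem _ _ hi1, List.getD_eq_getElem _ _ hi2] at this

/-! ### Rotation machinery -/

lemma getD_set_helper (l : List ℕ) (j v t : ℕ) :
    (l.set j v).getD t 0 = if j = t ∧ j < l.length then v else l.getD t 0 := by
  rcases lt_or_ge t l.length with ht | ht
  · rcases eq_or_ne j t with rfl | hne
    · split_ifs with h
      · rw [List.getD_eq_getElem _ _ (by rw [List.length_set]; exact ht),
          List.getElem_set_self]
      · exact absurd ⟨rfl, ht⟩ h
    · rw [if_neg (by tauto), List.getD_eq_getElem _ _ (by rw [List.length_set]; exact ht),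
        List.getD_eq_getElem _ _ ht, List.getElem_set_of_ne hne]
  · rw [if_neg (by omega), List.getD_eq_default _ _ (by rw [List.length_set]; exact ht),
      List.getD_eq_default _ _ ht]

lemma rnk_min (h : RowsOK ν δ R y) {m : ℕ} (hm : m ∈ R y) (hmin : ∀ w ∈ R y, m ≤ w) :
    rnk (Aof ν δ R y) m + 1 = (R y).card := by
  have hsub := h.sub y le_rfl
  have heq : (Aof ν δ R y).filter (fun z => m < z) = (R y).erase m := by
    ext z
    simp only [Finset.mem_filter, Finset.mem_erase]
    constructor
    · rintro ⟨hzA, hz⟩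
      exact ⟨by omega, h.up y le_rfl m hm z hzA (by omega)⟩
    · rintro ⟨hz1, hz2⟩
      have := hmin z hz2
      exact ⟨hsub hz2, by omega⟩
  unfold rnk
  rw [heq, Finset.card_erase_of_mem hm]
  have : 1 ≤ (R y).card := Finset.card_pos.2 ⟨m, hm⟩
  omega

lemma mem_Aof_mono {x y k : ℕ} (hx : x ∈ Aof ν δ R k) (hyk : y ≤ k)
    (hB : Bf ν δ y ≤ x) (hS : x ≤ Sf ν δ y) : x ∈ Aof ν δ R y := by
  rw [mem_Aof] at hx ⊢
  exact ⟨⟨hB, hS⟩, fun y1 h1 => hx.2 y1 (by omega)⟩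

/-- the fundamental rank invariant along a column -/
lemma rnk_invariant (hδ : IsIncrement ν δ) (hR : ∀ y, y < ν.length → RowsOK ν δ R y)
    {i m : ℕ} (hmA : m ∈ Aof ν δ R i) :
    ∀ y, i ≤ y → y < ν.length →
      (∀ y1, i ≤ y1 → y1 < y → ∀ w ∈ R y1, m ≤ w) →
      m ∈ Aof ν δ R y ∧
        rnk (Aof ν δ R y) m + (∑ t ∈ Finset.Ico i y, (R t).card) =
          rnk (Aof ν δ R i) m + ∑ t ∈ Finset.Ico i y, (δ.getD t 0 + 1) := by
  intro y
  induction y with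
  | zero =>
    intro h1 _ _
    have : i = 0 := by omega
    subst this
    simp [hmA]
  | succ y ih =>
    intro h1 h2 hchain
    rcases eq_or_lt_of_le h1 with heq | hlt
    · rw [← heq]
      simp [hmA]
    · have hy : i ≤ y := by omega
      obtain ⟨hA, heq⟩ := ih hy (by omega) (fun y1 ha hb => hchain y1 ha (by omega))
      have hok : RowsOK ν δ R y := hR y (by omega)
      have hle : ∀ w ∈ R y, m ≤ w := hchain y hy (by omega)
      have hmem := mem_Aof_succ hδ hok hA hle
      have hr := rnk_succ hδ hok hA hle
      refine ⟨hmem, ?_⟩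
      rw [Finset.sum_Ico_succ_top hy, Finset.sum_Ico_succ_top hy]
      omega

/-- `m` is below all of row `y` when it is available but not chosen -/
lemma le_all_of_notMem (h : RowsOK ν δ R y) {m : ℕ} (hA : m ∈ Aof ν δ R y)
    (hnR : m ∉ R y) : ∀ w ∈ R y, m < w := by
  intro w hw
  by_contra hc
  push_neg at hc
  exact hnR (h.up y le_rfl w hw m hA hc)

/-- membership in a row via rank -/
lemma mem_row_iff_rnk (h : RowsOK ν δ R y) {m : ℕ} (hA : m ∈ Aof ν δ R y) :
    m ∈ R y ↔ rnk (Aof ν δ R y) m < (R y).card := by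
  conv_lhs => rw [row_eq_topk h]
  exact mem_topk hA

/-! ### The rotated row system -/

structure RotData (ν δ : List ℕ) (R : ℕ → Finset ℕ) (i k m m' : ℕ) : Prop where
  hR : ∀ y, y < ν.length → RowsOK ν δ R y
  empt : ∀ y, ν.length ≤ y → R y = ∅
  full : Aof ν δ R (ν.length - 1) ⊆ R (ν.length - 1)
  hik : i < k
  hkn : k < ν.length
  hmR : m ∈ R i
  hmmin : ∀ w ∈ R i, m ≤ w
  hm'R : m' ∈ R i
  hmm' : m < m'
  hm'sec : ∀ w ∈ R i, w ≠ m → m' ≤ w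
  hmid : ∀ y, i < y → y < k → ∀ x1 ∈ R y, Sf ν δ i < x1
  hmk : m ∈ R k

noncomputable def Rmod (R : ℕ → Finset ℕ) (i k m m' : ℕ) : ℕ → Finset ℕ :=
  fun y => if y = i then (R i).erase m else if y = k then insert m' (R k) else R y

lemma Rmod_i {R : ℕ → Finset ℕ} {i k m m' : ℕ} : Rmod R i k m m' i = (R i).erase m := by
  unfold Rmod; simp

lemma Rmod_k {R : ℕ → Finset ℕ} {i k m m' : ℕ} (hik : i < k) :
    Rmod R i k m m' k = insert m' (R k) := by
  unfold Rmod
  rw [if_neg (by omega), if_pos rfl]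

lemma Rmod_other {R : ℕ → Finset ℕ} {i k m m' y : ℕ} (h1 : y ≠ i) (h2 : y ≠ k) :
    Rmod R i k m m' y = R y := by
  unfold Rmod
  rw [if_neg h1, if_neg h2]

namespace RotData

variable {i k m m' : ℕ} (d : RotData ν δ R i k m m')
include d

lemma hin : i < ν.length := by have := d.hik; have := d.hkn; omega

lemma mAi : m ∈ Aof ν δ R i := (d.hR i d.hin).sub i le_rfl d.hmR

lemma m'Ai : m' ∈ Aof ν δ R i := (d.hR i d.hin).sub i le_rfl d.hm'R

lemma m'Si : m' ≤ Sf ν δ i := (mem_Aof.1 d.m'Ai).1.2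

lemma mSi : m ≤ Sf ν δ i := (mem_Aof.1 d.mAi).1.2

lemma mBi : Bf ν δ i ≤ m := (mem_Aof.1 d.mAi).1.1

lemma m'notA {y : ℕ} (hy : i < y) : m' ∉ Aof ν δ R y := by
  intro h
  exact (mem_Aof.1 h).2 i hy m d.hmR ⟨d.hmm', d.m'Si⟩

lemma m'notRk : m' ∉ R k := fun h => d.m'notA d.hik ((d.hR k d.hkn).sub k le_rfl h)

/-- availability below the rotation level is unchanged -/
lemma Aof_le_i {y : ℕ} (hy : y ≤ i) : Aof ν δ (Rmod R i k m m') y = Aof ν δ R y := by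
  have hik := d.hik
  exact Aof_congr (fun y1 h1 => Rmod_other (by omega) (by omega))

/-- availability in the rotation window -/
lemma Aof_window (hδ : IsIncrement ν δ) {y : ℕ} (hy1 : i < y) (hy2 : y ≤ k) :
    Aof ν δ (Rmod R i k m m') y = insert m' (Aof ν δ R y) := by
  have hik := d.hik
  have hkn := d.hkn
  ext x
  simp only [Finset.mem_insert]
  constructor
  · intro hx
    rw [mem_Aof] at hx
    obtain ⟨hbd, hbl⟩ := hx
    by_cases hxm' : x = m'
    · left; exact hxm'
    right
    rw [mem_Aof]
    refine ⟨hbd, ?_⟩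
    rintro y1 h1 x1 hx1 ⟨ha, hb⟩
    -- turn an old blocker into a new one
    by_cases hy1i : y1 = i
    · by_cases hx1m : x1 = m
      · -- blocker was m : then x ∈ (m, m'] and x ≠ m', contradiction
        have ham : m < x := by omega
        have hbi : x ≤ Sf ν δ i := by rw [← hy1i]; exact hb
        have hmm'2 := d.hmm'
        have hm'Si2 := d.m'Si
        have hmBi2 := d.mBi
        have hxm'2 : x ≤ m' := by
          by_contra hc
          push_neg at hc
          exact hbl i (by omega) m'
            (by rw [Rmod_i]; exact Finset.mem_erase.2 ⟨by omega, d.hm'R⟩) ⟨hc, hbi⟩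
        have hxA : x ∈ Aof ν δ R i := by
          rw [mem_Aof]
          refine ⟨⟨by omega, by omega⟩, ?_⟩
          rintro y2 h2 x2 hx2 ⟨hc, hd2⟩
          refine hbl y2 (by omega) x2 ?_ ⟨hc, hd2⟩
          rw [Rmod_other (by omega) (by have := d.hik; omega)]
          exact hx2
        have hxR : x ∈ R i := (d.hR i d.hin).up i le_rfl m d.hmR x hxA (le_of_lt ham)
        have := d.hm'sec x hxR (by omega)
        omega
      · refine hbl y1 h1 x1 ?_ ⟨ha, hb⟩
        rw [hy1i] at hx1 ⊢
        rw [Rmod_i]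
        exact Finset.mem_erase.2 ⟨hx1m, hx1⟩
    · exact hbl y1 h1 x1
        (by rw [Rmod_other hy1i (by omega)]; exact hx1) ⟨ha, hb⟩
  · intro hx
    rcases hx with rfl | hx
    · -- m' is available in the window
      rw [mem_Aof]
      have hBy : Bf ν δ y ≤ Bf ν δ i := Bf_anti hδ (by omega)
      have hSy : Sf ν δ i ≤ Sf ν δ y := Sf_mono (by omega)
      have h1 := d.mBi
      have h2 := d.hmm'
      have h3 := d.m'Si
      refine ⟨⟨by omega, by omega⟩, ?_⟩
      rintro y1 h1' x1 hx1 ⟨ha, hb⟩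
      rcases lt_trichotomy y1 i with hlt | rfl | hgt
      · rw [Rmod_other (by omega) (by omega)] at hx1
        exact (mem_Aof.1 d.m'Ai).2 y1 hlt x1 hx1 ⟨ha, hb⟩
      · rw [Rmod_i] at hx1
        have := d.hm'sec x1 (Finset.mem_of_mem_erase hx1) (Finset.mem_erase.1 hx1).1
        omega
      · rw [Rmod_other (by omega) (by omega)] at hx1
        have := d.hmid y1 hgt (by omega) x1 hx1
        have := d.m'Si
        omega
    · -- old available points stay available
      rw [mem_Aof] at hx ⊢
      obtain ⟨hbd, hbl⟩ := hx
      refine ⟨hbd, ?_⟩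
      rintro y1 h1 x1 hx1 ⟨ha, hb⟩
      by_cases hy1i : y1 = i
      · subst hy1i
        rw [Rmod_i] at hx1
        exact hbl y1 h1 x1 (Finset.mem_of_mem_erase hx1) ⟨ha, hb⟩
      · rw [Rmod_other hy1i (by omega)] at hx1
        exact hbl y1 h1 x1 hx1 ⟨ha, hb⟩

/-- availability above the rotation window is unchanged -/
lemma Aof_gt (hδ : IsIncrement ν δ) {y : ℕ} (hy : k < y) :
    Aof ν δ (Rmod R i k m m') y = Aof ν δ R y := by
  have hik := d.hik
  have hkn := d.hkn
  have hSik : Sf ν δ i ≤ Sf ν δ k := Sf_mono (by omega)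
  ext x
  rw [mem_Aof, mem_Aof]
  constructor
  · rintro ⟨hbd, hbl⟩
    refine ⟨hbd, ?_⟩
    rintro y1 h1 x1 hx1 ⟨ha, hb⟩
    by_cases hy1i : y1 = i
    · subst hy1i
      by_cases hx1m : x1 = m
      · rcases le_or_gt x m' with hxm' | hxm'
        · -- use the new blocker m at row k
          refine hbl k hy m ?_ ⟨by omega, by have := d.m'Si; omega⟩
          rw [Rmod_k hik]
          exact Finset.mem_insert_of_mem d.hmk
        · -- use the new blocker m' at row i
          refine hbl y1 h1 m' ?_ ⟨hxm', hb⟩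
          rw [Rmod_i]
          exact Finset.mem_erase.2 ⟨by have := d.hmm'; omega, d.hm'R⟩
      · refine hbl y1 h1 x1 ?_ ⟨ha, hb⟩
        rw [Rmod_i]
        exact Finset.mem_erase.2 ⟨hx1m, hx1⟩
    · refine hbl y1 h1 x1 ?_ ⟨ha, hb⟩
      by_cases hy1k : y1 = k
      · subst hy1k
        rw [Rmod_k hik]
        exact Finset.mem_insert_of_mem hx1
      · rw [Rmod_other hy1i hy1k]
        exact hx1
  · rintro ⟨hbd, hbl⟩
    refine ⟨hbd, ?_⟩
    rintro y1 h1 x1 hx1 ⟨ha, hb⟩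
    by_cases hy1i : y1 = i
    · subst hy1i
      rw [Rmod_i] at hx1
      exact hbl y1 h1 x1 (Finset.mem_of_mem_erase hx1) ⟨ha, hb⟩
    · by_cases hy1k : y1 = k
      · subst hy1k
        rw [Rmod_k hik] at hx1
        rcases Finset.mem_insert.1 hx1 with rfl | hx1'
        · exact hbl y1 h1 m d.hmk ⟨by have := d.hmm'; omega, hb⟩
        · exact hbl y1 h1 x1 hx1' ⟨ha, hb⟩
      · rw [Rmod_other hy1i hy1k] at hx1
        exact hbl y1 h1 x1 hx1 ⟨ha, hb⟩

lemma good_Rmod (hδ : IsIncrement ν δ) : GoodF ν δ (Rmod R i k m m') := by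
  have hik := d.hik
  have hkn := d.hkn
  have hin := d.hin
  have hmm' := d.hmm'
  -- row-by-row facts
  have hsub : ∀ y, y < ν.length → Rmod R i k m m' y ⊆ Aof ν δ (Rmod R i k m m') y := by
    intro y hy
    rcases lt_trichotomy y i with h | rfl | h
    · rw [Rmod_other (by omega) (by omega), d.Aof_le_i (by omega)]
      exact (d.hR y hy).sub y le_rfl
    · rw [Rmod_i, d.Aof_le_i le_rfl]
      exact fun z hz => (d.hR y hy).sub y le_rfl (Finset.mem_of_mem_erase hz)
    · rcases lt_trichotomy y k with h2 | rfl | h2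
      · rw [Rmod_other (by omega) (by omega), d.Aof_window hδ h (by omega)]
        exact fun z hz => Finset.mem_insert_of_mem ((d.hR y hy).sub y le_rfl hz)
      · rw [Rmod_k hik, d.Aof_window hδ h le_rfl]
        intro z hz
        rcases Finset.mem_insert.1 hz with rfl | hz'
        · exact Finset.mem_insert_self _ _
        · exact Finset.mem_insert_of_mem ((d.hR y hy).sub y le_rfl hz')
      · rw [Rmod_other (by omega) (by omega), d.Aof_gt hδ h2]
        exact (d.hR y hy).sub y le_rfl
  have hne : ∀ y, y < ν.length → (Rmod R i k m m' y).Nonempty := by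
    intro y hy
    rcases eq_or_ne y i with rfl | h1
    · exact ⟨m', by rw [Rmod_i]; exact Finset.mem_erase.2 ⟨by omega, d.hm'R⟩⟩
    rcases eq_or_ne y k with rfl | h2
    · exact ⟨m', by rw [Rmod_k hik]; exact Finset.mem_insert_self _ _⟩
    · rw [Rmod_other h1 h2]
      exact (d.hR y hy).ne y le_rfl
  have hup : ∀ y, y < ν.length → ∀ u ∈ Rmod R i k m m' y,
      ∀ x ∈ Aof ν δ (Rmod R i k m m') y, u ≤ x → x ∈ Rmod R i k m m' y := by
    intro y hy u hu x hx hux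
    rcases lt_trichotomy y i with h | rfl | h
    · rw [Rmod_other (by omega) (by omega)] at hu ⊢
      rw [d.Aof_le_i (by omega)] at hx
      exact (d.hR y hy).up y le_rfl u hu x hx hux
    · rw [Rmod_i] at hu ⊢
      rw [d.Aof_le_i le_rfl] at hx
      have huR := Finset.mem_of_mem_erase hu
      have hxR : x ∈ R y := (d.hR y hy).up y le_rfl u huR x hx hux
      have := d.hm'sec u huR (Finset.mem_erase.1 hu).1
      exact Finset.mem_erase.2 ⟨by omega, hxR⟩
    · rcases lt_trichotomy y k with h2 | rfl | h2
      · rw [Rmod_other (by omega) (by omega)] at hu ⊢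
        rw [d.Aof_window hδ h (by omega)] at hx
        rcases Finset.mem_insert.1 hx with rfl | hx'
        · exfalso
          have := d.hmid y h h2 u hu
          have := d.m'Si
          omega
        · exact (d.hR y hy).up y le_rfl u hu x hx' hux
      · rw [Rmod_k hik] at hu ⊢
        rw [d.Aof_window hδ h le_rfl] at hx
        rcases Finset.mem_insert.1 hx with rfl | hx'
        · exact Finset.mem_insert_self _ _
        rcases Finset.mem_insert.1 hu with rfl | hu'
        · -- u = m' : then x > m' > m and x follows m
          have hxm' : x ≠ u := by
            rintro rfl
            exact d.m'notA hik hx'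
          exact Finset.mem_insert_of_mem
            ((d.hR y hy).up y le_rfl m d.hmk x hx' (by omega))
        · exact Finset.mem_insert_of_mem ((d.hR y hy).up y le_rfl u hu' x hx' hux)
      · rw [Rmod_other (by omega) (by omega)] at hu ⊢
        rw [d.Aof_gt hδ h2] at hx
        exact (d.hR y hy).up y le_rfl u hu x hx hux
  refine ⟨⟨fun y1 h1 => hsub y1 (by omega), fun y1 h1 => hne y1 (by omega),
      fun y1 h1 => hup y1 (by omega)⟩, ?_, ?_⟩
  · intro y hy
    rw [Rmod_other (by omega) (by omega)]
    exact d.empt y hy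
  · -- fullness
    rcases eq_or_lt_of_le (show k ≤ ν.length - 1 by omega) with heq | hlt
    · have hf : Aof ν δ R k ⊆ R k := by rw [heq]; exact d.full
      rw [← heq, Rmod_k hik, d.Aof_window hδ hik le_rfl]
      intro z hz
      rcases Finset.mem_insert.1 hz with rfl | hz'
      · exact Finset.mem_insert_self _ _
      · exact Finset.mem_insert_of_mem (hf hz')
    · rw [Rmod_other (by omega) (by omega), d.Aof_gt hδ hlt]
      exact d.full

lemma card_Rmod_i : (Rmod R i k m m' i).card + 1 = (R i).card := by
  rw [Rmod_i, Finset.card_erase_of_mem d.hmR]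
  have : 1 ≤ (R i).card := Finset.card_pos.2 ⟨m, d.hmR⟩
  omega

lemma card_Rmod_k : (Rmod R i k m m' k).card = (R k).card + 1 := by
  rw [Rmod_k d.hik, Finset.card_insert_of_notMem d.m'notRk]

lemma Tset_Rmod : Tset ν (Rmod R i k m m') =
    insert (m', k) (Tset ν R \ {(m, i)}) := by
  have hik := d.hik
  have hkn := d.hkn
  have hin := d.hin
  ext ⟨x, y⟩
  simp only [Tset, Set.mem_setOf_eq, Set.mem_insert_iff, Set.mem_diff,
    Set.mem_singleton_iff, Prod.mk.injEq]
  constructor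
  · rintro ⟨hy, hx⟩
    rcases eq_or_ne y i with rfl | h1
    · rw [Rmod_i] at hx
      right
      exact ⟨⟨hy, Finset.mem_of_mem_erase hx⟩, fun hc =>
        (Finset.mem_erase.1 hx).1 hc.1⟩
    rcases eq_or_ne y k with rfl | h2
    · rw [Rmod_k hik] at hx
      rcases Finset.mem_insert.1 hx with rfl | hx'
      · left; exact ⟨rfl, rfl⟩
      · right; exact ⟨⟨hy, hx'⟩, fun hc => h1 hc.2⟩
    · rw [Rmod_other h1 h2] at hx
      right
      exact ⟨⟨hy, hx⟩, fun hc => h1 hc.2⟩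
  · rintro (⟨rfl, rfl⟩ | ⟨⟨hy, hx⟩, hne⟩)
    · refine ⟨hkn, ?_⟩
      rw [Rmod_k hik]
      exact Finset.mem_insert_self _ _
    · refine ⟨hy, ?_⟩
      rcases eq_or_ne y i with rfl | h1
      · rw [Rmod_i]
        exact Finset.mem_erase.2 ⟨fun hc => hne ⟨hc, rfl⟩, hx⟩
      rcases eq_or_ne y k with rfl | h2
      · rw [Rmod_k hik]
        exact Finset.mem_insert_of_mem hx
      · rw [Rmod_other h1 h2]
        exact hx

end RotData

/-- rows strictly between the rotation rows lie beyond `Sf i` -/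
lemma row_above_S (hR : ∀ y, y < ν.length → RowsOK ν δ R y) {i y m : ℕ}
    (hi : i < y) (hyn : y < ν.length) (hmRi : m ∈ R i) (hmA : m ∈ Aof ν δ R y)
    (hge : (R y).card ≤ rnk (Aof ν δ R y) m) : ∀ x1 ∈ R y, Sf ν δ i < x1 := by
  intro x1 hx1
  have hok := hR y hyn
  have hx1A : x1 ∈ Aof ν δ R y := hok.sub y le_rfl hx1
  have hx1r : rnk (Aof ν δ R y) x1 < (R y).card := by
    rw [← mem_row_iff_rnk hok hx1A]
    exact hx1
  rcases lt_trichotomy x1 m with h | rfl | h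
  · exfalso
    have := rnk_lt_of_lt hmA h
    omega
  · omega
  · -- m < x1 : x1 must avoid the blocker (i, m)
    by_contra hc
    push_neg at hc
    exact (mem_Aof.1 hx1A).2 i hi m hmRi ⟨h, hc⟩

/-- sums over a window of row cardinalities, translated through `μ` -/
lemma sum_card_window {μ : List ℕ} (hcard : ∀ y, y < ν.length → (R y).card = μ.getD y 0 + 1)
    {i y : ℕ} (hy : y ≤ ν.length) :
    ∑ t ∈ Finset.Ico i y, (R t).card = (∑ t ∈ Finset.Ico i y, μ.getD t 0) + (y - i) := by
  rcases le_or_gt i y with h | h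
  · calc ∑ t ∈ Finset.Ico i y, (R t).card
        = ∑ t ∈ Finset.Ico i y, (μ.getD t 0 + 1) := by
          apply Finset.sum_congr rfl
          intro t ht
          simp only [Finset.mem_Ico] at ht
          rw [hcard t (by omega)]
      _ = (∑ t ∈ Finset.Ico i y, μ.getD t 0) + (y - i) := by
          rw [Finset.sum_add_distrib, Finset.sum_const, smul_eq_mul, mul_one, Nat.card_Ico]
  · rw [Finset.Ico_eq_empty (by omega), Finset.sum_empty, Finset.sum_empty]
    omega

lemma sum_delta_window {i y : ℕ} (h : i ≤ y) :
    ∑ t ∈ Finset.Ico i y, (δ.getD t 0 + 1) =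
      (∑ t ∈ Finset.Ico i y, δ.getD t 0) + (y - i) := by
  rw [Finset.sum_add_distrib, Finset.sum_const, smul_eq_mul, mul_one, Nat.card_Ico]

lemma rotation_backward (hδ : IsIncrement ν δ) (hν0 : 0 < ν.length)
    {μ μ' : List ℕ} {T T' : Set (ℕ × ℕ)}
    (hμ : IsNuPath ν μ) (hμ' : IsNuPath ν μ') (hT : IsDNTree ν δ T)
    (hT' : IsDNTree ν δ T')
    (hcT : ∀ y, y < ν.length → rowN T y = μ.getD y 0 + 1)
    (hcT' : ∀ y, y < ν.length → rowN T' y = μ'.getD y 0 + 1)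
    (hrot : TreeRotation (nuCheck ν δ) T T') : DRot δ μ μ' := by
  classical
  obtain ⟨q, p, r, hpT, hqT, hrT, hpq1, hqp2, hrq2, hqr1, hrect, hT'eq⟩ := hrot
  set R := rowsOf ν T with hRdef
  have hg := goodF_of_tree hδ hν0 hT
  have hR : ∀ y, y < ν.length → RowsOK ν δ R y := fun y hy => hg.rowsOK hy
  have hTeq : T = Tset ν R := (Tset_rowsOf hδ hT.1).symm
  set i := q.2 with hidef
  set k := p.2 with hkdef
  set m := q.1 with hmdef
  set m' := r.1 with hm'def
  have hmemT : ∀ a b, (a, b) ∈ T ↔ (b < ν.length ∧ a ∈ R b) := by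
    intro a b
    rw [hTeq]
    exact Iff.rfl
  have hq' : q = (m, i) := rfl
  have hp' : p = (m, k) := Prod.ext hpq1 rfl
  have hr' : r = (m', i) := Prod.ext rfl hrq2
  have hqTm : (m, i) ∈ T := by rw [← hq']; exact hqT
  have hpTm : (m, k) ∈ T := by rw [← hp']; exact hpT
  have hrTm : (m', i) ∈ T := by rw [← hr']; exact hrT
  have hkn : k < ν.length := ((hmemT m k).1 hpTm).1
  have hik : i < k := hqp2
  have hin : i < ν.length := by omega
  have hmRi : m ∈ R i := ((hmemT m i).1 hqTm).2
  have hmRk : m ∈ R k := ((hmemT m k).1 hpTm).2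
  have hm'Ri : m' ∈ R i := ((hmemT m' i).1 hrTm).2
  have hmm' : m < m' := hqr1
  have hmSi : m ≤ Sf ν δ i := (mem_Aof.1 ((hR i hin).sub i le_rfl hmRi)).1.2
  have hmBi : Bf ν δ i ≤ m := (mem_Aof.1 ((hR i hin).sub i le_rfl hmRi)).1.1
  have hm'Si : m' ≤ Sf ν δ i := (mem_Aof.1 ((hR i hin).sub i le_rfl hm'Ri)).1.2
  -- m is the minimum of row i
  have hmmin : ∀ w ∈ R i, m ≤ w := by
    intro w hw
    by_contra hc
    push_neg at hc
    exact hT.2.1 (w, i) ((hmemT w i).2 ⟨hin, hw⟩) (m, k) hpTm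
      (incomp_mk hδ hc hik hmSi hin)
  -- m' is the second minimum of row i
  have hm'sec : ∀ w ∈ R i, w ≠ m → m' ≤ w := by
    intro w hw hwm
    by_contra hc
    push_neg at hc
    have := hrect (w, i) ((hmemT w i).2 ⟨hin, hw⟩)
      (by simpa using hmmin w hw) (by simpa using le_of_lt hc)
      (by simp) (by simpa using le_of_lt hik)
    rcases this with h | h | h
    · rw [hp'] at h
      have := congrArg Prod.snd h
      simp only at this
      omega
    · rw [hq'] at h
      exact hwm (congrArg Prod.fst h)
    · rw [hr'] at h
      have := congrArg Prod.fst h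
      simp only at this
      omega
  -- m does not appear strictly inside the window
  have hnot : ∀ y, i < y → y < k → m ∉ R y := by
    intro y h1 h2 hc
    have := hrect (m, y) ((hmemT m y).2 ⟨by omega, hc⟩)
      (by simp) (by simpa using le_of_lt hmm') (by simpa using le_of_lt h1)
      (by simpa using le_of_lt h2)
    rcases this with h | h | h
    · rw [hp'] at h
      have := congrArg Prod.snd h
      simp only at this
      omega
    · rw [hq'] at h
      have := congrArg Prod.snd h
      simp only at this
      omega
    · rw [hr'] at h
      have := congrArg Prod.fst h
      simp only at this
      omega
  -- m is available throughout the window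
  have hmA : ∀ y, i ≤ y → y ≤ k → m ∈ Aof ν δ R y := by
    intro y h1 h2
    apply mem_Aof_mono ((hR k hkn).sub k le_rfl hmRk) h2
    · calc Bf ν δ y ≤ Bf ν δ i := Bf_anti hδ h1
        _ ≤ m := hmBi
    · calc m ≤ Sf ν δ i := hmSi
        _ ≤ Sf ν δ y := Sf_mono h1
  -- the chain and the invariant
  have hchain : ∀ y, y ≤ k → ∀ y1, i ≤ y1 → y1 < y → ∀ w ∈ R y1, m ≤ w := by
    intro y hy y1 h1 h2 w hw
    rcases eq_or_lt_of_le h1 with rfl | h1'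
    · exact hmmin w hw
    · exact le_of_lt (le_all_of_notMem (hR y1 (by omega)) (hmA y1 (by omega) (by omega))
        (hnot y1 h1' (by omega)) w hw)
  have hinv : ∀ y, i ≤ y → y ≤ k →
      rnk (Aof ν δ R y) m + (∑ t ∈ Finset.Ico i y, (R t).card) =
        rnk (Aof ν δ R i) m + ∑ t ∈ Finset.Ico i y, (δ.getD t 0 + 1) := by
    intro y h1 h2
    exact (rnk_invariant hδ hR (hmA i le_rfl (le_of_lt hik)) y h1 (by omega)
      (fun y1 ha hb => hchain y h2 y1 ha hb)).2
  have hcard : ∀ y, y < ν.length → (R y).card = μ.getD y 0 + 1 := by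
    intro y hy
    rw [← hcT y hy, rowN_tree hδ hT.1 hy]
  have hrnki : rnk (Aof ν δ R i) m + 1 = (R i).card := rnk_min (hR i hin) hmRi hmmin
  -- the two DRot inequalities
  have hμlen : μ.length = ν.length := hμ.1
  have hc2 : 2 ≤ (R i).card := Finset.one_lt_card.2 ⟨m, hmRi, m', hm'Ri, by omega⟩
  refine ⟨i, by omega, by have := hcard i hin; omega, k, hik, by omega, ?_, ?_, ?_⟩
  · -- δ sum ≤ μ sum at k
    have h1 := hinv k (le_of_lt hik) le_rfl
    have h2 : rnk (Aof ν δ R k) m < (R k).card :=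
      (mem_row_iff_rnk (hR k hkn) (hmA k (le_of_lt hik) le_rfl)).1 hmRk
    have h3 := sum_card_window (R := R) hcard (i := i) (le_of_lt hkn)
    have h4 := sum_delta_window (δ := δ) (le_of_lt hik)
    have h5 : ∑ t ∈ Finset.Ico i (k+1), μ.getD t 0 =
        μ.getD i 0 + ∑ t ∈ Finset.Ico (i+1) (k+1), μ.getD t 0 :=
      Finset.sum_eq_sum_Ico_succ_bot (by omega) _
    have h6 : ∑ t ∈ Finset.Ico i (k+1), μ.getD t 0 =
        (∑ t ∈ Finset.Ico i k, μ.getD t 0) + μ.getD k 0 :=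
      Finset.sum_Ico_succ_top (by omega) _
    have h7 := hcard i hin
    have h8 := hcard k hkn
    omega
  · -- strict inequalities inside the window
    intro k' h1 h2
    have hinv' := hinv k' (by omega) (by omega)
    have hnot' : m ∉ R k' := hnot k' h1 h2
    have hge : (R k').card ≤ rnk (Aof ν δ R k') m := by
      by_contra hc
      push_neg at hc
      exact hnot' ((mem_row_iff_rnk (hR k' (by omega)) (hmA k' (by omega) (by omega))).2 hc)
    have h3 := sum_card_window (R := R) hcard (i := i) (y := k') (by omega)
    have h4 := sum_delta_window (δ := δ) (i := i) (y := k') (by omega)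
    have h5 : ∑ t ∈ Finset.Ico i (k'+1), μ.getD t 0 =
        μ.getD i 0 + ∑ t ∈ Finset.Ico (i+1) (k'+1), μ.getD t 0 :=
      Finset.sum_eq_sum_Ico_succ_bot (by omega) _
    have h6 : ∑ t ∈ Finset.Ico i (k'+1), μ.getD t 0 =
        (∑ t ∈ Finset.Ico i k', μ.getD t 0) + μ.getD k' 0 :=
      Finset.sum_Ico_succ_top (by omega) _
    have h7 := hcard i hin
    have h8 := hcard k' (by omega)
    omega
  · -- identification of μ'
    -- build the rotation data and use the row description of T'
    have hmid : ∀ y, i < y → y < k → ∀ x1 ∈ R y, Sf ν δ i < x1 := by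
      intro y ha hb
      have hinv' := hinv y (by omega) (by omega)
      have hge : (R y).card ≤ rnk (Aof ν δ R y) m := by
        by_contra hc
        push_neg at hc
        exact hnot y ha hb ((mem_row_iff_rnk (hR y (by omega)) (hmA y (by omega) (by omega))).2 hc)
      exact row_above_S hR ha (by omega) hmRi (hmA y (by omega) (by omega)) hge
    have d : RotData ν δ R i k m m' :=
      ⟨hR, hg.empt, hg.full, hik, hkn, hmRi, hmmin, hm'Ri, hmm', hm'sec, hmid, hmRk⟩
    have hT'R : T' = Tset ν (Rmod R i k m m') := by
      rw [d.Tset_Rmod, hT'eq, hTeq, hq']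
    have hcn : ∀ y, y < ν.length → rowN T' y = (Rmod R i k m m' y).card := by
      intro y hy
      rw [hT'R]
      exact rowN_Tset _ hy
    have hci := d.card_Rmod_i
    have hck := d.card_Rmod_k
    have hgl : ∀ t, t < ν.length → μ'.getD t 0 + 1 = (Rmod R i k m m' t).card := by
      intro t ht
      rw [← hcn t ht]
      exact (hcT' t ht).symm
    have hco : ∀ t, t ≠ i → t ≠ k → (Rmod R i k m m' t).card = (R t).card := by
      intro t a b
      rw [Rmod_other a b]
    apply List.ext_getElem
    · rw [hμ'.1, List.length_set, List.length_set, hμlen]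
    intro t h1 h2
    have ht : t < ν.length := by rw [hμ'.1] at h1; exact h1
    rw [← List.getD_eq_getElem μ' 0 h1, ← List.getD_eq_getElem _ 0 h2,
      getD_set_helper, getD_set_helper]
    rcases eq_or_ne t k with rfl | htk
    · rw [if_pos ⟨rfl, by rw [List.length_set]; omega⟩]
      have h8 := hgl k ht
      rw [hck] at h8
      have h9 := hcard k ht
      omega
    · rw [if_neg (by rintro ⟨h, _⟩; exact htk h.symm)]
      rcases eq_or_ne t i with rfl | hti
      · rw [if_pos ⟨rfl, by omega⟩]
        have h8 := hgl i ht
        have h9 := hcard i ht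
        omega
      · rw [if_neg (by rintro ⟨h, _⟩; exact hti h.symm)]
        have h8 := hgl t ht
        have h9 := hcard t ht
        rw [hco t hti htk] at h8
        omega

end Rows

lemma rotation_forward (hδ : IsIncrement ν δ) (hν0 : 0 < ν.length)
    {μ μ' : List ℕ} {T T' : Set (ℕ × ℕ)}
    (hμ : IsNuPath ν μ) (hμ' : IsNuPath ν μ') (hT : IsDNTree ν δ T)
    (hT' : IsDNTree ν δ T')
    (hcT : ∀ y, y < ν.length → rowN T y = μ.getD y 0 + 1)
    (hcT' : ∀ y, y < ν.length → rowN T' y = μ'.getD y 0 + 1)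
    (hrot : DRot δ μ μ') : TreeRotation (nuCheck ν δ) T T' := by
  classical
  obtain ⟨i, hi1, hi2, k, hik, hkl, hsum, hstrict, hμ'eq⟩ := hrot
  set R := rowsOf ν T with hRdef
  have hg := goodF_of_tree hδ hν0 hT
  have hR : ∀ y, y < ν.length → RowsOK ν δ R y := fun y hy => hg.rowsOK hy
  have hTeq : T = Tset ν R := (Tset_rowsOf hδ hT.1).symm
  have hμlen : μ.length = ν.length := hμ.1
  have hkn : k < ν.length := by omega
  have hin : i < ν.length := by omega
  have hcard : ∀ y, y < ν.length → (R y).card = μ.getD y 0 + 1 := by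
    intro y hy
    rw [← hcT y hy, rowN_tree hδ hT.1 hy]
  have hne_i : (R i).Nonempty := (hR i hin).ne i le_rfl
  set m := (R i).min' hne_i with hmdef
  have hmRi : m ∈ R i := (R i).min'_mem hne_i
  have hmmin : ∀ w ∈ R i, m ≤ w := fun w hw => (R i).min'_le w hw
  have hrnki : rnk (Aof ν δ R i) m + 1 = (R i).card := rnk_min (hR i hin) hmRi hmmin
  have hmA_i : m ∈ Aof ν δ R i := (hR i hin).sub i le_rfl hmRi
  -- the rank bound at an intermediate row, given the invariant there
  have hge_of : ∀ y1, i < y1 → y1 < k →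
      rnk (Aof ν δ R y1) m + (∑ t ∈ Finset.Ico i y1, (R t).card) =
        rnk (Aof ν δ R i) m + (∑ t ∈ Finset.Ico i y1, (δ.getD t 0 + 1)) →
      (R y1).card ≤ rnk (Aof ν δ R y1) m := by
    intro y1 ha hb hEq
    have h3 := sum_card_window (R := R) hcard (i := i) (y := y1) (by omega)
    have h4 := sum_delta_window (δ := δ) (i := i) (y := y1) (by omega)
    have h5 : ∑ t ∈ Finset.Ico i (y1+1), μ.getD t 0 =
        μ.getD i 0 + ∑ t ∈ Finset.Ico (i+1) (y1+1), μ.getD t 0 :=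
      Finset.sum_eq_sum_Ico_succ_bot (by omega) _
    have h6 : ∑ t ∈ Finset.Ico i (y1+1), μ.getD t 0 =
        (∑ t ∈ Finset.Ico i y1, μ.getD t 0) + μ.getD y1 0 :=
      Finset.sum_Ico_succ_top (by omega) _
    have h7 := hstrict y1 ha hb
    have h8 := hcard y1 (by omega)
    have h9 := hcard i hin
    omega
  have hchain : ∀ y, y ≤ k → ∀ y1, i ≤ y1 → y1 < y → ∀ w ∈ R y1, m ≤ w := by
    intro y
    induction y using Nat.strong_induction_on with
    | _ y ihy =>
      intro hyk y1 ha hb w hw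
      rcases eq_or_lt_of_le ha with rfl | ha'
      · exact hmmin w hw
      · have hch1 : ∀ y2, i ≤ y2 → y2 < y1 → ∀ w2 ∈ R y2, m ≤ w2 :=
          fun y2 hc hd => ihy y1 (by omega) (by omega) y2 hc hd
        obtain ⟨hAy1, hEq⟩ := rnk_invariant hδ hR hmA_i y1 (by omega) (by omega) hch1
        have hge := hge_of y1 ha' (by omega) hEq
        refine le_of_lt (le_all_of_notMem (hR y1 (by omega)) hAy1 ?_ w hw)
        intro hc
        have := (mem_row_iff_rnk (hR y1 (by omega)) hAy1).1 hc
        omega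
  obtain ⟨hAk, hEqk⟩ := rnk_invariant hδ hR hmA_i k (by omega) hkn (hchain k le_rfl)
  have hmRk : m ∈ R k := by
    rw [mem_row_iff_rnk (hR k hkn) hAk]
    have h3 := sum_card_window (R := R) hcard (i := i) (y := k) (by omega)
    have h4 := sum_delta_window (δ := δ) (i := i) (y := k) (by omega)
    have h5 : ∑ t ∈ Finset.Ico i (k+1), μ.getD t 0 =
        μ.getD i 0 + ∑ t ∈ Finset.Ico (i+1) (k+1), μ.getD t 0 :=
      Finset.sum_eq_sum_Ico_succ_bot (by omega) _
    have h6 : ∑ t ∈ Finset.Ico i (k+1), μ.getD t 0 =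
        (∑ t ∈ Finset.Ico i k, μ.getD t 0) + μ.getD k 0 :=
      Finset.sum_Ico_succ_top (by omega) _
    have h8 := hcard k hkn
    have h9 := hcard i hin
    omega
  have hmid : ∀ y, i < y → y < k → ∀ x1 ∈ R y, Sf ν δ i < x1 := by
    intro y ha hb
    obtain ⟨hAy, hEq⟩ := rnk_invariant hδ hR hmA_i y (by omega) (by omega)
      (fun y1 hc hd => hchain y (by omega) y1 hc hd)
    exact row_above_S hR ha (by omega) hmRi hAy (hge_of y ha hb hEq)
  -- the second minimum
  have hc2 : 2 ≤ (R i).card := by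
    have := hcard i hin
    omega
  have hne2 : ((R i).erase m).Nonempty := by
    rw [← Finset.card_pos, Finset.card_erase_of_mem hmRi]
    omega
  set m' := ((R i).erase m).min' hne2 with hm'def
  have hm'em : m' ∈ (R i).erase m := ((R i).erase m).min'_mem hne2
  have hm'Ri : m' ∈ R i := Finset.mem_of_mem_erase hm'em
  have hmm' : m < m' := by
    have h1 := hmmin m' hm'Ri
    have h2 := (Finset.mem_erase.1 hm'em).1
    omega
  have hm'sec : ∀ w ∈ R i, w ≠ m → m' ≤ w :=
    fun w hw hwm => ((R i).erase m).min'_le w (Finset.mem_erase.2 ⟨hwm, hw⟩)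
  have d : RotData ν δ R i k m m' :=
    ⟨hR, hg.empt, hg.full, hik, hkn, hmRi, hmmin, hm'Ri, hmm', hm'sec, hmid, hmRk⟩
  -- the rotated tree is T'
  have hT'' : IsDNTree ν δ (Tset ν (Rmod R i k m m')) :=
    isDNTree_Tset hδ (d.good_Rmod hδ)
  have hci := d.card_Rmod_i
  have hck := d.card_Rmod_k
  have hco : ∀ t, t ≠ i → t ≠ k → (Rmod R i k m m' t).card = (R t).card := by
    intro t a b
    rw [Rmod_other a b]
  have hcount'' : ∀ y, y < ν.length →
      rowN (Tset ν (Rmod R i k m m')) y = μ'.getD y 0 + 1 := by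
    intro y hy
    rw [rowN_Tset _ hy, hμ'eq, getD_set_helper, getD_set_helper]
    rcases eq_or_ne y k with rfl | hyk
    · rw [if_pos ⟨rfl, by rw [List.length_set]; omega⟩, hck, hcard y hy]
    · rw [if_neg (by rintro ⟨h, _⟩; exact hyk h.symm)]
      rcases eq_or_ne y i with rfl | hyi
      · rw [if_pos ⟨rfl, by omega⟩]
        have := hcard y hy
        omega
      · rw [if_neg (by rintro ⟨h, _⟩; exact hyi h.symm), hco y hyi hyk, hcard y hy]
  have hTT' : T' = Tset ν (Rmod R i k m m') :=
    tree_unique hδ hν0 hT' hT'' (fun y hy => by rw [hcT' y hy, hcount'' y hy])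
  -- exhibit the rotation
  refine ⟨(m, i), (m, k), (m', i), ?_, ?_, ?_, rfl, hik, rfl, hmm', ?_, ?_⟩
  · rw [hTeq]; exact ⟨hkn, hmRk⟩
  · rw [hTeq]; exact ⟨hin, hmRi⟩
  · rw [hTeq]; exact ⟨hin, hm'Ri⟩
  · -- the rectangle is empty
    rintro ⟨a, b⟩ hsT ha1 ha2 hb1 hb2
    simp only at ha1 ha2 hb1 hb2
    rw [hTeq] at hsT
    obtain ⟨hbn, haR⟩ := hsT
    rcases eq_or_lt_of_le hb1 with rfl | hbgt
    · -- bottom row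
      rcases eq_or_ne a m with rfl | ham
      · right; left; rfl
      · right; right
        have h1 := hm'sec a haR ham
        rw [Prod.mk.injEq]
        exact ⟨by omega, rfl⟩
    · rcases eq_or_lt_of_le hb2 with rfl | hblt
      · -- top row
        rcases eq_or_ne a m with rfl | ham
        · left; rfl
        · exfalso
          have h1 : m < a := by
            have := hmmin; omega
          have h2 := d.m'Si
          have haA : a ∈ Aof ν δ R b := (hR b hbn).sub b le_rfl haR
          exact (mem_Aof.1 haA).2 i hik m hmRi ⟨h1, by omega⟩
      · -- middle rows : impossible
        exfalso
        have h1 := hmid b hbgt hblt a haR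
        have h2 := d.m'Si
        omega
  · rw [hTT', d.Tset_Rmod, hTeq]

end DNF

/-- For every ν-path `μ` there is a unique (δ,ν)-tree with
exactly `μ_i + 1` points at height `i` for each `i`; this defines a bijection
(the right flushing) between ν-paths and (δ,ν)-trees.  Moreover two ν-paths
are related by a δ-rotation if and only if the corresponding trees are related
by a ν̌-rotation. -/
theorem dn_flushing_bijection (ν δ : List ℕ) (hν : ν ≠ []) (hδ : IsIncrement ν δ) :
    (∀ μ, IsNuPath ν μ →
      ∃! T : Set (ℕ × ℕ), IsDNTree ν δ T ∧
        ∀ i, i < ν.length → rowN T i = μ.getD i 0 + 1) ∧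
    (∀ T, IsDNTree ν δ T →
      ∃! μ : List ℕ, IsNuPath ν μ ∧
        ∀ i, i < ν.length → rowN T i = μ.getD i 0 + 1) ∧
    (∀ μ μ' T T', IsNuPath ν μ → IsNuPath ν μ' → IsDNTree ν δ T → IsDNTree ν δ T' →
      (∀ i, i < ν.length → rowN T i = μ.getD i 0 + 1) →
      (∀ i, i < ν.length → rowN T' i = μ'.getD i 0 + 1) →
      (DRot δ μ μ' ↔ TreeRotation (nuCheck ν δ) T T')) := by
  have hν0 : 0 < ν.length := List.length_pos_iff.2 hν
  refine ⟨?_, ?_, ?_⟩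
  · intro μ hμ
    obtain ⟨ht, hc⟩ := DNF.frow_tree hδ hν0 hμ
    refine ⟨DNF.Tset ν (DNF.frow ν δ μ), ⟨ht, hc⟩, ?_⟩
    rintro T' ⟨hT', hc'⟩
    exact DNF.tree_unique hδ hν0 hT' ht
      (fun y hy => by rw [hc' y hy, hc y hy])
  · intro T hT
    obtain ⟨μT, h1, h2⟩ := DNF.tree_path hδ hν0 hT
    refine ⟨μT, ⟨h1, h2⟩, ?_⟩
    rintro μ' ⟨h1', h2'⟩
    apply DNF.nupath_ext h1' h1
    intro i hi
    have := h2 i hi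
    have := h2' i hi
    omega
  · intro μ μ' T T' hμ hμ' hT hT' hcT hcT'
    exact ⟨DNF.rotation_forward hδ hν0 hμ hμ' hT hT' hcT hcT',
      DNF.rotation_backward hδ hν0 hμ hμ' hT hT' hcT hcT'⟩
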